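/- arXiv:2104.15031 — 6 statements merged into one kernel-verified Lean document; each statement's English description precedes it below -/
import Mathlib

section
/- Let κ be a regular uncountable cardinal, ⟨C_α | α < κ⟩ a C-sequence, with derived functions tr and λ from walks. For all α < δ < β < κ with δ ∈ im(tr(α,β)), λ(α,β) = max{λ(δ,β), λ(α,δ)}. -/
open Cardinal Ordinal Set

noncomputable section

/-- The order type of a set of ordinals. -/
def otp (s : Set Ordinal) : Ordinal := Ordinal.type ((· < ·) : s → s → Prop)

/-- `a < b` for sets of ordinals: every element of `a` is below every element of `b`. -/
def SetLT (a b : Set Ordinal.{0}) : Prop := ∀ α ∈ a, ∀ β ∈ b, α < β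

/-- `A` is a pairwise disjoint subfamily of `[κ]^σ`:
a family of subsets of (ordinals below) `κ` of order type `σ`, pairwise disjoint. -/
def IsFamily (κ σ : Ordinal.{0}) (A : Set (Set Ordinal)) : Prop :=
  (∀ a ∈ A, a ⊆ Set.Iio κ ∧ otp a = Ordinal.lift.{1} σ) ∧ A.PairwiseDisjoint id

/-- Shelah's principle `Pr₁(κ, κ, θ, χ)`. -/
def Pr1 (κ θ χ : Cardinal.{0}) : Prop :=
  ∃ c : Ordinal → Ordinal → Ordinal,
    (∀ α β : Ordinal, α < β → β < κ.ord → c α β < θ.ord) ∧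
    ∀ σ : Ordinal, σ < χ.ord → ∀ A : Set (Set Ordinal),
      IsFamily κ.ord σ A → #A = Cardinal.lift.{1} κ →
      ∀ τ : Ordinal, τ < θ.ord →
        ∃ a ∈ A, ∃ b ∈ A, SetLT a b ∧ ∀ α ∈ a, ∀ β ∈ b, c α β = τ
/-- `D` is a club (closed unbounded set) in `κ`. -/
def ClubIn (D : Set Ordinal.{0}) (κ : Ordinal.{0}) : Prop :=
  D ⊆ Set.Iio κ ∧ (∀ α < κ, ∃ β ∈ D, α ≤ β) ∧
    ∀ δ < κ, 0 < δ → (∀ γ < δ, ∃ x ∈ D, γ < x ∧ x < δ) → δ ∈ D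

/-- `S` is a stationary subset of `κ`. -/
def StatIn (S : Set Ordinal.{0}) (κ : Ordinal.{0}) : Prop :=
  S ⊆ Set.Iio κ ∧ ∀ D : Set Ordinal, ClubIn D κ → (S ∩ D).Nonempty

/-- `δ` is an accumulation point belonging to `s`, i.e. `δ ∈ acc(s)`:
`δ ∈ s` and `sup(s ∩ δ) = δ > 0`. -/
def IsAccOf (s : Set Ordinal.{0}) (δ : Ordinal.{0}) : Prop :=
  δ ∈ s ∧ 0 < δ ∧ ∀ γ < δ, ∃ x ∈ s, γ < x ∧ x < δ

/-- `C` is a C-sequence over `κ`: each `C α` is a closed subset of `α`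
with `sup (C α) = sup α`. -/
def IsCSeq (κ : Ordinal.{0}) (C : Ordinal.{0} → Set Ordinal.{0}) : Prop :=
  (∀ α < κ, C α ⊆ Set.Iio α) ∧
  (∀ α < κ, ∀ δ, 0 < δ → δ < α → (∀ γ < δ, ∃ x ∈ C α, γ < x ∧ x < δ) → δ ∈ C α) ∧
  (∀ α < κ, ∀ γ : Ordinal, (∀ x ∈ C α, x ≤ γ) → ∀ δ < α, δ ≤ γ)

/-- The upper trace of the walk from `β` down to `α` along the C-sequence `C`. -/
def Tr (C : Ordinal.{0} → Set Ordinal.{0}) (α β : Ordinal.{0}) : ℕ → Ordinal.{0}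
  | 0 => β
  | n + 1 => if α < Tr C α β n then sInf (C (Tr C α β n) ∩ Set.Ici α) else α

/-- The length `ρ₂(α,β)` of the walk from `β` down to `α`. -/
def rho2 (C : Ordinal.{0} → Set Ordinal.{0}) (α β : Ordinal.{0}) : ℕ :=
  sInf {n | Tr C α β n = α}

/-- The (finite) trace `tr(α,β)` of the walk, as a list. -/
def trL (C : Ordinal.{0} → Set Ordinal.{0}) (α β : Ordinal.{0}) : List Ordinal.{0} :=
  (List.range (rho2 C α β)).map (Tr C α β)

/-- `λ(α,β) = max_{i<ρ₂(α,β)} sup (C_{Tr(α,β)(i)} ∩ α)`. -/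
def lamb (C : Ordinal.{0} → Set Ordinal.{0}) (α β : Ordinal.{0}) : Ordinal.{0} :=
  (Finset.range (rho2 C α β)).sup fun i => sSup (C (Tr C α β i) ∩ Set.Iio α)

/-- `η_{α,β} := min { n < ω ∣ η ∈ C_{Tr(α,β)(n)} or n = ρ₂(α,β) } + 1`. -/
def etaIdx (C : Ordinal.{0} → Set Ordinal.{0}) (η α β : Ordinal.{0}) : ℕ :=
  sInf {n | η ∈ C (Tr C α β n) ∨ n = rho2 C α β} + 1

/-- The transformation principle `Pℓ₁(κ, θ, χ)`. -/
def Pl1 (κ θ χ : Cardinal.{0}) : Prop :=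
  ∃ t : Ordinal.{0} → Ordinal.{0} → Ordinal.{0} × Ordinal.{0} × Ordinal.{0},
    (∀ α β : Ordinal, α < β → β < κ.ord →
      (t α β).1 ≤ (t α β).2.1 ∧ (t α β).2.1 ≤ α ∧ α < (t α β).2.2 ∧ (t α β).2.2 ≤ β) ∧
    ∀ σ : Ordinal, σ < χ.ord → ∀ A : Set (Set Ordinal),
      IsFamily κ.ord σ A → #A = Cardinal.lift.{1} κ →
      ∃ S : Set Ordinal, StatIn S κ.ord ∧
        ∀ αs ∈ S, ∀ βs ∈ S, αs < βs →
          ∀ τ : Ordinal, τ < θ.ord → τ < αs →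
            ∃ a ∈ A, ∃ b ∈ A, SetLT a b ∧
              ∀ α ∈ a, ∀ β ∈ b, t α β = (τ, αs, βs)

/-- The transformation principle `Pℓ₂(κ, Γ, χ)`. -/
def Pl2 (κ : Cardinal.{0}) (Γ : Set Ordinal.{0}) (χ : Cardinal.{0}) : Prop :=
  ∃ t : Ordinal.{0} → Ordinal.{0} → Ordinal.{0} × Ordinal.{0},
    (∀ α β : Ordinal, α < β → β < κ.ord →
      (t α β).1 ≤ α ∧ α < (t α β).2 ∧ (t α β).2 ≤ β) ∧
    ∀ σ : Ordinal, σ < χ.ord → ∀ A : Set (Set Ordinal),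
      IsFamily κ.ord σ A → #A = Cardinal.lift.{1} κ →
      ∃ D : Set Ordinal, ClubIn D κ.ord ∧
        ∀ αs ∈ Γ ∩ D, ∀ βs ∈ Γ ∩ D, αs < βs →
          ∃ a ∈ A, ∃ b ∈ A, SetLT a b ∧
            ∀ α ∈ a, ∀ β ∈ b, t α β = (αs, βs)

/-- The principle `Pr₁⁺(κ, θ, χ)`. -/
def Pr1plus (κ θ χ : Cardinal.{0}) : Prop :=
  ∃ o : Ordinal.{0} → Ordinal.{0} → Ordinal.{0},
    (∀ α β : Ordinal, 0 < α → α < β → β < κ.ord → o α β < α ∧ o α β < θ.ord) ∧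
    ∀ ζ : Ordinal, ζ < θ.ord → ∀ σ : Ordinal, σ < χ.ord →
      ∀ A : Set (Set Ordinal), IsFamily κ.ord σ A → #A = Cardinal.lift.{1} κ →
        ∃ γ < κ.ord, ∀ b : Set Ordinal,
          b ⊆ Set.Iio κ.ord → b ⊆ Set.Ici γ → otp b = Ordinal.lift.{1} σ →
          ∃ a ∈ A, a ⊆ Set.Iio γ ∧ ∀ α ∈ a, ∀ β ∈ b, o α β = ζ

/-- The oscillation principle `Pℓ₆(κ, χ)`. -/
def Pl6 (κ χ : Cardinal.{0}) : Prop :=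
  ∃ d : List Ordinal.{0} → ℕ,
    ∀ (u v : Ordinal.{0} → Set (List Ordinal.{0}))
      (s : Ordinal.{0} → List Ordinal.{0}) (φ : Ordinal.{0} → Ordinal.{0}),
      (∃ ε < κ.ord, ∀ α : Ordinal, ε ≤ α → α < κ.ord → φ α < α) →
      (∀ α < κ.ord, (u α).Nonempty ∧ #(u α) < Cardinal.lift.{1} χ ∧
        ∀ ϱ ∈ u α, (∀ x ∈ ϱ, x < κ.ord) ∧ α ∈ ϱ) →
      (∀ α < κ.ord, (v α).Nonempty ∧ #(v α) < Cardinal.lift.{1} χ ∧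
        ∀ σl ∈ v α, (∀ x ∈ σl, x < κ.ord) ∧ (s α ++ [α]) <+: σl) →
      ∃ α β : Ordinal, α < β ∧ β < κ.ord ∧ φ α = φ β ∧
        ∀ ϱ ∈ u α, ∀ σl ∈ v β, d (ϱ ++ σl) = ϱ.length

/-- Shelah's principle `Pr₆(κ, κ, θ, χ)`. -/
def Pr6 (κ θ χ : Cardinal.{0}) : Prop :=
  ∃ d : List Ordinal.{0} → Ordinal.{0},
    (∀ l, d l < θ.ord) ∧
    ∀ τ : Ordinal, τ < θ.ord → ∀ E : Set Ordinal, ClubIn E κ.ord →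
      ∀ u v : Ordinal.{0} → Set (List Ordinal.{0}),
        (∀ α ∈ E, (u α).Nonempty ∧ #(u α) < Cardinal.lift.{1} χ ∧
          ∀ ϱ ∈ u α, (∀ x ∈ ϱ, x < κ.ord) ∧ α ∈ ϱ) →
        (∀ α ∈ E, (v α).Nonempty ∧ #(v α) < Cardinal.lift.{1} χ ∧
          ∀ σl ∈ v α, (∀ x ∈ σl, x < κ.ord) ∧ α ∈ σl) →
        ∃ α ∈ E, ∃ β ∈ E, α < β ∧
          ∀ ϱ ∈ u α, ∀ σl ∈ v β, d (ϱ ++ σl) = τ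

/-- The square principle `□(κ)`. -/
def SquarePrin (κ : Ordinal.{0}) : Prop :=
  ∃ C : Ordinal.{0} → Set Ordinal.{0},
    (∀ α < κ, C α ⊆ Set.Iio α) ∧
    (∀ α < κ, Order.IsSuccLimit α →
      (∀ γ < α, ∃ x ∈ C α, γ < x) ∧
      (∀ δ < α, 0 < δ → (∀ γ < δ, ∃ x ∈ C α, γ < x ∧ x < δ) → δ ∈ C α)) ∧
    (∀ α < κ, ∀ δ, IsAccOf (C α) δ → C α ∩ Set.Iio δ = C δ) ∧
    ¬ ∃ D : Set Ordinal, ClubIn D κ ∧ ∀ δ, IsAccOf D δ → D ∩ Set.Iio δ = C δ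

/-- The stick principle `⫯(κ)` (with witnesses of size `μ`). -/
def Stick (κ μ : Cardinal.{0}) : Prop :=
  ∃ X : Ordinal.{0} → Set Ordinal.{0},
    (∀ γ < κ.ord, X γ ⊆ Set.Iio κ.ord) ∧
    ∀ Y : Set Ordinal, Y ⊆ Set.Iio κ.ord → #Y = Cardinal.lift.{1} κ →
      ∃ γ < κ.ord, X γ ⊆ Y ∧ #(X γ) = Cardinal.lift.{1} μ

/-- A filter is `λ`-complete: it is closed under intersections of fewer than `λ` sets. -/
def FilterComplete (lam : Cardinal.{0}) {α : Type 1} (F : Filter α) : Prop :=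
  ∀ ι : Type 1, #ι < Cardinal.lift.{1} lam →
    ∀ f : ι → Set α, (∀ i, f i ∈ F) → (⋂ i, f i) ∈ F

/-- `lam` is a strongly compact cardinal: every `lam`-complete (proper) filter
extends to a `lam`-complete ultrafilter. -/
def IsStronglyCompact (lam : Cardinal.{0}) : Prop :=
  ∀ (α : Type 1) (F : Filter α), F.NeBot → FilterComplete lam F →
    ∃ U : Ultrafilter α, (↑U : Filter α) ≤ F ∧ FilterComplete lam (↑U : Filter α)

/-- `last(α,β)`: `α` if `λ(α,β) < α`, and otherwise `min(im(tr(α,β)))`. -/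
def lastStep (C : Ordinal.{0} → Set Ordinal.{0}) (α β : Ordinal.{0}) : Ordinal.{0} :=
  if lamb C α β < α then α else sInf {x | ∃ i < rho2 C α β, Tr C α β i = x}

section WalkAux

variable {κ : Ordinal.{0}} {C : Ordinal.{0} → Set Ordinal.{0}}

lemma Tr_succ_def (C : Ordinal.{0} → Set Ordinal.{0}) (α β : Ordinal) (n : ℕ) :
    Tr C α β (n + 1) =
      if α < Tr C α β n then sInf (C (Tr C α β n) ∩ Set.Ici α) else α := rfl

/-- If `0 < α < γ < κ`, then `C γ` has an element `≥ α`. -/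
lemma step_nonempty (hC : IsCSeq κ C) {α γ : Ordinal} (hα : 0 < α) (h : α < γ)
    (hγ : γ < κ) : (C γ ∩ Set.Ici α).Nonempty := by
  by_contra h'
  have hsub : ∀ x ∈ C γ, x < α := by
    intro x hx
    by_contra hge
    exact h' ⟨x, hx, le_of_not_gt hge⟩
  by_cases hcof : ∀ γ' < α, ∃ x ∈ C γ, γ' < x ∧ x < α
  · exact absurd (hsub α (hC.2.1 γ hγ α hα h hcof)) (lt_irrefl α)
  · push_neg at hcof
    obtain ⟨γ', hγ', hbd⟩ := hcof
    have hb : ∀ x ∈ C γ, x ≤ γ' := by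
      intro x hx
      rcases lt_or_ge γ' x with h1 | h1
      · exact absurd (hbd x hx h1) (not_le.2 (hsub x hx))
      · exact h1
    exact absurd (hC.2.2 γ hγ γ' hb α h) (not_le.2 hγ')

lemma Tr_le_beta (hC : IsCSeq κ C) {α β : Ordinal} (hβ : β < κ) (hαβ : α ≤ β) :
    ∀ n, Tr C α β n ≤ β := by
  intro n
  induction n with
  | zero => exact le_rfl
  | succ n ih =>
    rw [Tr_succ_def]
    split_ifs with h
    · by_cases hS : (C (Tr C α β n) ∩ Set.Ici α).Nonempty
      · have hm := csInf_mem hS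
        have := hC.1 (Tr C α β n) (lt_of_le_of_lt ih hβ) hm.1
        exact le_of_lt (lt_of_lt_of_le this ih)
      · rw [Set.not_nonempty_iff_eq_empty] at hS
        rw [hS]
        simpa using Ordinal.zero_le β
    · exact hαβ

lemma Tr_ge_alpha (hC : IsCSeq κ C) {α β : Ordinal} (hβ : β < κ) (hαβ : α ≤ β) :
    ∀ n, α ≤ Tr C α β n := by
  intro n
  induction n with
  | zero => exact hαβ
  | succ n ih =>
    rw [Tr_succ_def]
    split_ifs with h
    · rcases eq_zero_or_pos α with h0 | h0
      · rw [h0]; exact zero_le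
      · have hS := step_nonempty hC h0 h (lt_of_le_of_lt (Tr_le_beta hC hβ hαβ n) hβ)
        exact (csInf_mem hS).2
    · exact le_rfl

lemma Tr_step_lt (hC : IsCSeq κ C) {α β : Ordinal} (hβ : β < κ) (hαβ : α ≤ β)
    {n : ℕ} (h : α < Tr C α β n) : Tr C α β (n + 1) < Tr C α β n := by
  rw [Tr_succ_def, if_pos h]
  by_cases hS : (C (Tr C α β n) ∩ Set.Ici α).Nonempty
  · exact hC.1 (Tr C α β n) (lt_of_le_of_lt (Tr_le_beta hC hβ hαβ n) hβ) (csInf_mem hS).1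
  · rw [Set.not_nonempty_iff_eq_empty] at hS
    rw [hS]
    simpa using lt_of_le_of_lt (zero_le : (0 : Ordinal) ≤ α) h

lemma Tr_shift (C : Ordinal.{0} → Set Ordinal.{0}) (α β : Ordinal) :
    ∀ n, Tr C α β (n + 1) = Tr C α (Tr C α β 1) n := by
  intro n
  induction n with
  | zero => rfl
  | succ n ih =>
    rw [Tr_succ_def C α β (n + 1), ih]
    rfl

/-- The walk from `β` down to `α` terminates. -/
lemma Tr_reaches (hC : IsCSeq κ C) {α : Ordinal} :
    ∀ β, α ≤ β → β < κ → ∃ n, Tr C α β n = α := by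
  intro β
  induction β using Ordinal.induction with
  | h β IH =>
    intro hαβ hβ
    rcases eq_or_lt_of_le hαβ with heq | hlt
    · exact ⟨0, heq.symm⟩
    · have h1 : Tr C α β 1 < β := Tr_step_lt hC hβ hαβ (n := 0) hlt
      have h2 : α ≤ Tr C α β 1 := Tr_ge_alpha hC hβ hαβ 1
      obtain ⟨n, hn⟩ := IH (Tr C α β 1) h1 h2 (h1.trans hβ)
      exact ⟨n + 1, by rw [Tr_shift]; exact hn⟩

lemma Tr_rho2 (hC : IsCSeq κ C) {α β : Ordinal} (hβ : β < κ) (hαβ : α ≤ β) :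
    Tr C α β (rho2 C α β) = α :=
  Nat.sInf_mem (Tr_reaches hC β hαβ hβ)

lemma Tr_gt_of_lt_rho2 (hC : IsCSeq κ C) {α β : Ordinal} (hβ : β < κ) (hαβ : α ≤ β)
    {n : ℕ} (hn : n < rho2 C α β) : α < Tr C α β n :=
  lt_of_le_of_ne (Tr_ge_alpha hC hβ hαβ n)
    (fun h => Nat.notMem_of_lt_sInf hn h.symm)

/-- The walk is strictly decreasing up to `ρ₂`. -/
lemma Tr_strict_anti (hC : IsCSeq κ C) {α β : Ordinal} (hβ : β < κ) (hαβ : α ≤ β) :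
    ∀ j, j ≤ rho2 C α β → ∀ i < j, Tr C α β j < Tr C α β i := by
  intro j
  induction j with
  | zero => intro _ i hi; omega
  | succ j ih =>
    intro hj i hi
    have hstep : Tr C α β (j + 1) < Tr C α β j :=
      Tr_step_lt hC hβ hαβ (Tr_gt_of_lt_rho2 hC hβ hαβ (by omega))
    rcases Nat.lt_succ_iff_lt_or_eq.1 hi with hi' | hi'
    · exact hstep.trans (ih (by omega) i hi')
    · rw [hi']; exact hstep

end WalkAux

/-- If `α < δ < β < κ` and `δ ∈ im(tr(α,β))`, then `λ(α,β) = max {λ(δ,β), λ(α,δ)}`. -/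
theorem walk_lambda_max (κ : Cardinal.{0}) (hreg : κ.IsRegular) (hκ : ℵ₀ < κ)
    (C : Ordinal.{0} → Set Ordinal.{0}) (hC : IsCSeq κ.ord C)
    (α δ β : Ordinal) (h1 : α < δ) (h2 : δ < β) (h3 : β < κ.ord)
    (h4 : δ ∈ trL C α β) :
    lamb C α β = max (lamb C δ β) (lamb C α δ) := by
  simp only [trL, List.mem_map, List.mem_range] at h4
  obtain ⟨k, hkρ, hδk⟩ := h4
  have hαβ : α ≤ β := (h1.trans h2).le
  have hαδ : α ≤ δ := h1.le
  have hδκ : δ < κ.ord := h2.trans h3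
  -- the walk from `β` to `α` stays strictly above `δ` before step `k` …
  have hγδ : ∀ i < k, δ < Tr C α β i := by
    intro i hik
    rw [← hδk]
    exact Tr_strict_anti hC h3 hαβ k hkρ.le i hik
  -- … and is still `≥ δ` at step `i+1` for `i < k`
  have hnext : ∀ i < k, δ ≤ Tr C α β (i + 1) := by
    intro i hik
    rcases Nat.lt_or_ge (i + 1) k with h' | h'
    · exact le_of_lt (by rw [← hδk]; exact Tr_strict_anti hC h3 hαβ k hkρ.le (i + 1) h')
    · have h'' : i + 1 = k := by omega
      rw [h'', hδk]
  -- the walk to `δ` agrees with the walk to `α` up to step `k`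
  have hagree : ∀ i ≤ k, Tr C δ β i = Tr C α β i := by
    intro i
    induction i with
    | zero => intro _; rfl
    | succ i ih =>
      intro hik
      have hik' : i < k := by omega
      have hγδi : δ < Tr C α β i := hγδ i hik'
      have hγαi : α < Tr C α β i := h1.trans hγδi
      have hnexti : δ ≤ Tr C α β (i + 1) := hnext i hik'
      have hdef : Tr C α β (i + 1) = sInf (C (Tr C α β i) ∩ Set.Ici α) := by
        rw [Tr_succ_def, if_pos hγαi]
      have hSne : (C (Tr C α β i) ∩ Set.Ici α).Nonempty := by
        by_contra hS
        rw [Set.not_nonempty_iff_eq_empty] at hS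
        have h0 : δ ≤ 0 := by
          rw [hdef, hS] at hnexti
          simpa using hnexti
        exact absurd h0 (not_le.2 ((zero_le : (0 : Ordinal) ≤ α).trans_lt h1))
      have hmem := csInf_mem hSne
      have hmemδ : sInf (C (Tr C α β i) ∩ Set.Ici α) ∈ C (Tr C α β i) ∩ Set.Ici δ :=
        ⟨hmem.1, Set.mem_Ici.mpr (hdef ▸ hnexti)⟩
      have hEq : sInf (C (Tr C α β i) ∩ Set.Ici δ) = sInf (C (Tr C α β i) ∩ Set.Ici α) := by
        apply le_antisymm
        · exact csInf_le (OrderBot.bddBelow _) hmemδ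
        · exact csInf_le_csInf (OrderBot.bddBelow _) ⟨_, hmemδ⟩
            (Set.inter_subset_inter_right _ (Set.Ici_subset_Ici.2 hαδ))
      rw [Tr_succ_def, ih (by omega), if_pos hγδi, hEq, ← hdef]
  -- the length of the walk from `β` to `δ` is exactly `k`
  have hρδβ : rho2 C δ β = k := by
    have hkmem : Tr C δ β k = δ := by rw [hagree k le_rfl, hδk]
    have hle : rho2 C δ β ≤ k := Nat.sInf_le hkmem
    rcases Nat.lt_or_ge (rho2 C δ β) k with h' | h'
    · exfalso
      have h5 : Tr C δ β (rho2 C δ β) = δ :=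
        Nat.sInf_mem (⟨k, hkmem⟩ : {n | Tr C δ β n = δ}.Nonempty)
      rw [hagree _ h'.le] at h5
      exact (hγδ _ h').ne' h5
    · omega
  -- the walk from `δ` to `α` is the tail of the walk from `β` to `α`
  have hshift : ∀ j, Tr C α δ j = Tr C α β (k + j) := by
    intro j
    induction j with
    | zero => exact hδk.symm
    | succ j ih =>
      rw [Tr_succ_def C α δ j, ih]
      rfl
  have hreach : Tr C α δ (rho2 C α β - k) = α := by
    rw [hshift, Nat.add_sub_cancel' hkρ.le]
    exact Tr_rho2 hC h3 hαβ
  have hmδ : Tr C α δ (rho2 C α δ) = α :=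
    Nat.sInf_mem (⟨_, hreach⟩ : {n | Tr C α δ n = α}.Nonempty)
  have hmle : rho2 C α δ ≤ rho2 C α β - k := Nat.sInf_le hreach
  have hρeq : rho2 C α β = k + rho2 C α δ := by
    apply le_antisymm
    · apply Nat.sInf_le
      show Tr C α β (k + rho2 C α δ) = α
      rw [← hshift]
      exact hmδ
    · omega
  -- for `i < k` the relevant initial segments of the clubs agree
  have hsets : ∀ i < k, C (Tr C α β i) ∩ Set.Iio α = C (Tr C α β i) ∩ Set.Iio δ := by
    intro i hik
    ext x
    constructor
    · rintro ⟨hx, hxα⟩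
      exact ⟨hx, lt_of_lt_of_le hxα hαδ⟩
    · rintro ⟨hx, hxδ⟩
      refine ⟨hx, ?_⟩
      by_contra hge
      rw [Set.mem_Iio, not_lt] at hge
      have hγαi : α < Tr C α β i := h1.trans (hγδ i hik)
      have hdef : Tr C α β (i + 1) = sInf (C (Tr C α β i) ∩ Set.Ici α) := by
        rw [Tr_succ_def, if_pos hγαi]
      have h5 : Tr C α β (i + 1) ≤ x := hdef ▸ csInf_le (OrderBot.bddBelow _) ⟨hx, hge⟩
      exact absurd ((hnext i hik).trans h5) (not_le.2 hxδ)
  have hfg : ∀ i < k, sSup (C (Tr C δ β i) ∩ Set.Iio δ) = sSup (C (Tr C α β i) ∩ Set.Iio α) := by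
    intro i hik
    rw [hagree i hik.le, hsets i hik]
  have hfh : ∀ j, sSup (C (Tr C α δ j) ∩ Set.Iio α)
      = sSup (C (Tr C α β (k + j)) ∩ Set.Iio α) := by
    intro j
    rw [hshift]
  unfold lamb
  rw [hρδβ, hρeq]
  apply le_antisymm
  · apply Finset.sup_le
    intro i hi
    rw [Finset.mem_range] at hi
    show sSup (C (Tr C α β i) ∩ Set.Iio α) ≤ _
    rcases Nat.lt_or_ge i k with h' | h'
    · exact le_trans (le_of_eq (hfg i h').symm)
        (le_max_of_le_left (Finset.le_sup
          (f := fun i => sSup (C (Tr C δ β i) ∩ Set.Iio δ)) (Finset.mem_range.2 h')))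
    · have hik : k + (i - k) = i := by omega
      have heq := hfh (i - k)
      rw [hik] at heq
      exact le_trans (le_of_eq heq.symm)
        (le_max_of_le_right (Finset.le_sup
          (f := fun j => sSup (C (Tr C α δ j) ∩ Set.Iio α))
          (Finset.mem_range.2 (by omega : i - k < rho2 C α δ))))
  · apply max_le
    · apply Finset.sup_le
      intro i hi
      rw [Finset.mem_range] at hi
      show sSup (C (Tr C δ β i) ∩ Set.Iio δ) ≤ _
      exact le_trans (le_of_eq (hfg i hi)) (Finset.le_sup
        (f := fun i => sSup (C (Tr C α β i) ∩ Set.Iio α))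
        (Finset.mem_range.2 (by omega : i < k + rho2 C α δ)))
    · apply Finset.sup_le
      intro j hj
      rw [Finset.mem_range] at hj
      show sSup (C (Tr C α δ j) ∩ Set.Iio α) ≤ _
      exact le_trans (le_of_eq (hfh j)) (Finset.le_sup
        (f := fun i => sSup (C (Tr C α β i) ∩ Set.Iio α))
        (Finset.mem_range.2 (by omega : k + j < k + rho2 C α δ)))

end
end

section
/- Let κ be a regular uncountable cardinal and ⟨C_α | α < κ⟩ a C-sequence. For ordinals η < α < δ < β < κ, if λ(δ,β) = η and ρ₂(δ,β) = η_{δ,β}, then tr(α,β)(η_{α,β}) = δ, where for any ordinal η and pair (α,β), η_{α,β} := min{n < ω | η ∈ C_{Tr(α,β)(n)} or n = ρ₂(α,β)} + 1. -/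
open Cardinal Ordinal Set

noncomputable section

section WalkAux

variable {κ : Ordinal.{0}} {C : Ordinal.{0} → Set Ordinal.{0}}

/-- If `0 < δ < t < κ`, then `C t` has an element `≥ δ`. -/
lemma csq_nonempty (hC : IsCSeq κ C) {δ t : Ordinal} (h0 : 0 < δ) (h : δ < t)
    (ht : t < κ) : (C t ∩ Set.Ici δ).Nonempty := by
  by_contra hcon
  have hlt : ∀ x ∈ C t, x < δ := by
    intro x hx
    by_contra hxd
    exact hcon ⟨x, hx, not_lt.1 hxd⟩
  by_cases hcl : ∀ γ < δ, ∃ x ∈ C t, γ < x ∧ x < δ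
  · have hmem := hC.2.1 t ht δ h0 h hcl
    exact absurd (hlt δ hmem) (lt_irrefl δ)
  · push_neg at hcl
    obtain ⟨γ, hγδ, hγ⟩ := hcl
    have hub : ∀ x ∈ C t, x ≤ γ := by
      intro x hx
      by_contra hxg
      exact absurd (hlt x hx) (not_lt.2 (hγ x hx (not_le.1 hxg)))
    exact absurd (hC.2.2 t ht γ hub δ h) (not_le.2 hγδ)

lemma Tr_step (hC : IsCSeq κ C) {α β : Ordinal} (h0 : 0 < α) {n : ℕ}
    (ht : Tr C α β n < κ) (hlt : α < Tr C α β n) :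
    Tr C α β (n+1) ∈ C (Tr C α β n) ∧ α ≤ Tr C α β (n+1) ∧
      Tr C α β (n+1) < Tr C α β n := by
  have hne : (C (Tr C α β n) ∩ Set.Ici α).Nonempty := csq_nonempty hC h0 hlt ht
  have hmem := csInf_mem hne
  have heq : Tr C α β (n+1) = sInf (C (Tr C α β n) ∩ Set.Ici α) := by
    show (if α < Tr C α β n then _ else _) = _
    rw [if_pos hlt]
  rw [heq]
  exact ⟨hmem.1, hmem.2, hC.1 _ ht hmem.1⟩

lemma Tr_le (hC : IsCSeq κ C) {α β : Ordinal} (h0 : 0 < α) (hαβ : α ≤ β)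
    (hβ : β < κ) : ∀ n, Tr C α β n ≤ β := by
  intro n
  induction n with
  | zero => exact le_rfl
  | succ n ih =>
    by_cases hlt : α < Tr C α β n
    · exact le_trans (Tr_step hC h0 (lt_of_le_of_lt ih hβ) hlt).2.2.le ih
    · have : Tr C α β (n+1) = α := by
        show (if α < Tr C α β n then _ else _) = _
        rw [if_neg hlt]
      rw [this]; exact hαβ

lemma Tr_terminates (hC : IsCSeq κ C) {α β : Ordinal} (h0 : 0 < α) (hαβ : α < β)
    (hβ : β < κ) : ∃ n, Tr C α β n = α := by
  by_contra hcon
  push_neg at hcon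
  have key : ∀ n, α < Tr C α β n := by
    intro n
    induction n with
    | zero => exact hαβ
    | succ n ih =>
      have ht : Tr C α β n < κ := lt_of_le_of_lt (Tr_le hC h0 hαβ.le hβ n) hβ
      exact lt_of_le_of_ne (Tr_step hC h0 ht ih).2.1 (Ne.symm (hcon (n+1)))
  obtain ⟨x, hx, hmin⟩ := Ordinal.lt_wf.has_min {x | ∃ n, Tr C α β n = x} ⟨β, 0, rfl⟩
  obtain ⟨n, rfl⟩ := hx
  have ht : Tr C α β n < κ := lt_of_le_of_lt (Tr_le hC h0 hαβ.le hβ n) hβ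
  exact hmin _ ⟨n+1, rfl⟩ (Tr_step hC h0 ht (key n)).2.2

lemma Tr_bounds (hC : IsCSeq κ C) {α β : Ordinal} (h0 : 0 < α) (hαβ : α < β)
    (hβ : β < κ) : ∀ n ≤ rho2 C α β,
      α ≤ Tr C α β n ∧ (n < rho2 C α β → α < Tr C α β n) := by
  intro n
  induction n with
  | zero => exact fun _ => ⟨hαβ.le, fun _ => hαβ⟩
  | succ n ih =>
    intro hn
    have hnm : n < rho2 C α β := hn
    have ihn := ih hnm.le
    have hgt : α < Tr C α β n := ihn.2 hnm
    have ht : Tr C α β n < κ := lt_of_le_of_lt (Tr_le hC h0 hαβ.le hβ n) hβ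
    have hle := (Tr_step hC h0 ht hgt).2.1
    refine ⟨hle, fun hlt => ?_⟩
    have hne : Tr C α β (n+1) ≠ α := by
      intro heq
      exact Nat.notMem_of_lt_sInf hlt heq
    exact lt_of_le_of_ne hle (Ne.symm hne)

end WalkAux

/-- If `η < α < δ < β < κ`, `λ(δ,β) = η` and `ρ₂(δ,β) = η_{δ,β}`,
then `tr(α,β)(η_{α,β}) = δ`. -/
theorem walk_etaIdx (κ : Cardinal.{0}) (hreg : κ.IsRegular) (hκ : ℵ₀ < κ)
    (C : Ordinal.{0} → Set Ordinal.{0}) (hC : IsCSeq κ.ord C)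
    (η α δ β : Ordinal) (h0 : η < α) (h1 : α < δ) (h2 : δ < β) (h3 : β < κ.ord)
    (h4 : lamb C δ β = η) (h5 : rho2 C δ β = etaIdx C η δ β) :
    Tr C α β (etaIdx C η α β) = δ := by
  have hα0 : (0:Ordinal) < α := lt_of_le_of_lt (zero_le (a := η)) h0
  have hδ0 : (0:Ordinal) < δ := lt_trans hα0 h1
  simp only [etaIdx] at h5
  set m := rho2 C δ β with hm
  have hterm_δ : ∃ n, Tr C δ β n = δ := Tr_terminates hC hδ0 h2 h3
  have hTrm : Tr C δ β m = δ := Nat.sInf_mem hterm_δ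
  have hgt := Tr_bounds hC hδ0 h2 h3
  have hSδne : {n | η ∈ C (Tr C δ β n) ∨ n = m}.Nonempty := ⟨m, Or.inr rfl⟩
  set k := sInf {n | η ∈ C (Tr C δ β n) ∨ n = m} with hk
  have hmk : m = k + 1 := h5
  have hkm : k < m := by omega
  have hkmem : η ∈ C (Tr C δ β k) ∨ k = m := Nat.sInf_mem hSδne
  have hηk : η ∈ C (Tr C δ β k) := hkmem.resolve_right (by omega)
  -- coherence of the two walks up to step m
  have hcoh : ∀ n, n ≤ m → Tr C α β n = Tr C δ β n := by
    intro n
    induction n with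
    | zero => intro _; rfl
    | succ n ih =>
      intro hn
      have hnm : n < m := hn
      have ih' := ih hnm.le
      have hδt : δ < Tr C δ β n := (hgt n hnm.le).2 hnm
      have hseteq : C (Tr C δ β n) ∩ Set.Ici α = C (Tr C δ β n) ∩ Set.Ici δ := by
        ext x
        constructor
        · rintro ⟨hx, hαx⟩
          refine ⟨hx, ?_⟩
          show δ ≤ x
          by_contra hxδ
          push_neg at hxδ
          have hbdd : BddAbove (C (Tr C δ β n) ∩ Set.Iio δ) :=
            ⟨δ, fun y hy => hy.2.le⟩
          have hx1 : x ≤ sSup (C (Tr C δ β n) ∩ Set.Iio δ) :=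
            le_csSup hbdd ⟨hx, hxδ⟩
          have hx2 : sSup (C (Tr C δ β n) ∩ Set.Iio δ) ≤ lamb C δ β := by
            have hfl := Finset.le_sup (f := fun i => sSup (C (Tr C δ β i) ∩ Set.Iio δ))
              (Finset.mem_range.2 (show n < rho2 C δ β from hm ▸ hnm))
            simpa [lamb] using hfl
          rw [h4] at hx2
          exact absurd (le_trans hx1 hx2) (not_le.2 (lt_of_lt_of_le h0 hαx))
        · rintro ⟨hx, hδx⟩
          exact ⟨hx, le_trans h1.le hδx⟩
      show (if α < Tr C α β n then sInf (C (Tr C α β n) ∩ Set.Ici α) else α) =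
        (if δ < Tr C δ β n then sInf (C (Tr C δ β n) ∩ Set.Ici δ) else δ)
      rw [ih', if_pos (lt_trans h1 hδt), if_pos hδt, hseteq]
  have hTrαm : Tr C α β m = δ := (hcoh m le_rfl).trans hTrm
  -- the walk from β to α terminates
  have hterm_α : ∃ n, Tr C α β n = α := Tr_terminates hC hα0 (h1.trans h2) h3
  have hρα : Tr C α β (rho2 C α β) = α := Nat.sInf_mem hterm_α
  have hkα : η ∈ C (Tr C α β k) ∨ k = rho2 C α β :=
    Or.inl (by rw [hcoh k hkm.le]; exact hηk)
  have hbelow : ∀ j < k, ¬ (η ∈ C (Tr C α β j) ∨ j = rho2 C α β) := by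
    intro j hj h
    have hjm : j < m := hj.trans hkm
    rcases h with h | h
    · rw [hcoh j hjm.le] at h
      exact Nat.notMem_of_lt_sInf hj (Or.inl h)
    · have heqα : Tr C α β j = α := h ▸ hρα
      rw [hcoh j hjm.le] at heqα
      have hδj : δ < Tr C δ β j := (hgt j hjm.le).2 hjm
      rw [heqα] at hδj
      exact absurd h1 (lt_asymm hδj)
  have hSinf : sInf {n | η ∈ C (Tr C α β n) ∨ n = rho2 C α β} = k := by
    have hle := Nat.sInf_le (show k ∈ {n | η ∈ C (Tr C α β n) ∨ n = rho2 C α β} from hkα)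
    rcases lt_or_eq_of_le hle with hlt | heq
    · exact absurd (Nat.sInf_mem (⟨k, hkα⟩ : {n | η ∈ C (Tr C α β n) ∨ n = rho2 C α β}.Nonempty)) (hbelow _ hlt)
    · exact heq
  show Tr C α β (sInf {n | η ∈ C (Tr C α β n) ∨ n = rho2 C α β} + 1) = δ
  rw [hSinf, ← hmk]
  exact hTrαm


end
end

section
/- Let κ be a regular uncountable cardinal and ⟨C_α | α < κ⟩ a C-sequence. If 0 < δ < β < κ and δ ∉ ⋃_{α<κ} acc(C_α), then λ(δ, β) < δ. -/
open Cardinal Ordinal Set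

noncomputable section

/-- If `0 < δ < β < κ` and `δ ∉ ⋃_{α<κ} acc(C_α)`, then `λ(δ,β) < δ`. -/
theorem lamb_lt_of_not_acc (κ : Cardinal.{0}) (hreg : κ.IsRegular) (hκ : ℵ₀ < κ)
    (C : Ordinal.{0} → Set Ordinal.{0}) (hC : IsCSeq κ.ord C)
    (δ β : Ordinal) (h0 : 0 < δ) (h1 : δ < β) (h2 : β < κ.ord)
    (h3 : ∀ α < κ.ord, ¬ IsAccOf (C α) δ) :
    lamb C δ β < δ := by
  obtain ⟨hsub, hclosed, hsup⟩ := hC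
  -- Key facts about any α with δ < α < κ
  have key : ∀ α, δ < α → α < κ.ord →
      (C α ∩ Set.Ici δ).Nonempty ∧ sSup (C α ∩ Set.Iio δ) < δ := by
    intro α hδα hακ
    have hnub : ¬ ∀ γ < δ, ∃ x ∈ C α, γ < x ∧ x < δ := by
      intro hub
      exact h3 α hακ ⟨hclosed α hακ δ h0 hδα hub, h0, hub⟩
    have hne : (C α ∩ Set.Ici δ).Nonempty := by
      by_contra hne
      apply hnub
      intro γ hγ
      by_contra hx
      push_neg at hx
      have hbd : ∀ x ∈ C α, x ≤ γ := by
        intro x hxC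
        have hxδ : x < δ := by
          by_contra hge
          exact hne ⟨x, hxC, le_of_not_gt hge⟩
        by_contra hle
        exact (hx x hxC (lt_of_not_ge hle)).not_gt hxδ
      exact absurd (hsup α hακ γ hbd δ hδα) (not_le.mpr hγ)
    refine ⟨hne, ?_⟩
    have hle : sSup (C α ∩ Set.Iio δ) ≤ δ :=
      csSup_le' fun x hx => le_of_lt hx.2
    rcases lt_or_eq_of_le hle with h | h
    · exact h
    · exfalso
      apply hnub
      intro γ hγ
      by_contra hx
      push_neg at hx
      have hbd : sSup (C α ∩ Set.Iio δ) ≤ γ := by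
        apply csSup_le'
        intro x hxm
        by_contra hle'
        exact (hx x hxm.1 (lt_of_not_ge hle')).not_gt hxm.2
      rw [h] at hbd
      exact absurd hbd (not_le.mpr hγ)
  -- Bounds along the trace
  have trb : ∀ n, δ ≤ Tr C δ β n ∧ Tr C δ β n ≤ β := by
    intro n
    induction n with
    | zero => exact ⟨le_of_lt h1, le_rfl⟩
    | succ n ih =>
      by_cases h : δ < Tr C δ β n
      · rw [Tr, if_pos h]
        have hκn : Tr C δ β n < κ.ord := lt_of_le_of_lt ih.2 h2
        obtain ⟨hne, _⟩ := key _ h hκn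
        have hmem := csInf_mem hne
        refine ⟨hmem.2, ?_⟩
        exact le_trans (le_of_lt (hsub _ hκn hmem.1)) ih.2
      · rw [Tr, if_neg h]
        exact ⟨le_rfl, le_of_lt h1⟩
  -- Conclude
  rw [lamb]
  rw [Finset.sup_lt_iff (by simpa using h0)]
  intro i hi
  rw [Finset.mem_range] at hi
  have hneq : Tr C δ β i ≠ δ :=
    Nat.notMem_of_lt_sInf hi
  have hδi : δ < Tr C δ β i := lt_of_le_of_ne (trb i).1 (Ne.symm hneq)
  exact (key _ hδi (lt_of_le_of_lt (trb i).2 h2)).2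


end
end

section
/- Let κ be a regular uncountable cardinal. A stationary subset Γ ⊆ κ is nonreflecting (i.e., there is no α < κ of uncountable cofinality with Γ ∩ α stationary in α) if and only if there exists a C-sequence ⟨C_α | α < κ⟩ over κ with acc(C_α) ∩ Γ = ∅ for all α < κ. -/
open Cardinal Ordinal Set

noncomputable section

/-- The properties we need of each member of the C-sequence. -/
def AvoidsGood (Γ : Set Ordinal.{0}) (α : Ordinal.{0}) (s : Set Ordinal.{0}) : Prop :=
  s ⊆ Set.Iio α ∧
  (∀ δ, 0 < δ → δ < α → (∀ γ < δ, ∃ x ∈ s, γ < x ∧ x < δ) → δ ∈ s) ∧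
  (∀ γ : Ordinal, (∀ x ∈ s, x ≤ γ) → ∀ δ < α, δ ≤ γ) ∧
  (∀ δ ∈ Γ, ¬ IsAccOf s δ)

lemma no_acc_range {α : Ordinal.{0}} (g : ℕ → Ordinal.{0}) (hmono : StrictMono g)
    (hunb : ∀ δ < α, ∃ n, δ ≤ g n) {δ : Ordinal} (hδα : δ < α) (h0 : 0 < δ)
    (happ : ∀ γ < δ, ∃ x ∈ Set.range g, γ < x ∧ x < δ) : False := by
  have hex : ∃ n, δ ≤ g n := hunb δ hδα
  rcases h : Nat.find hex with _ | m
  · have hδg : δ ≤ g 0 := h ▸ Nat.find_spec hex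
    obtain ⟨x, ⟨k, rfl⟩, h0x, hxδ⟩ := happ 0 h0
    exact absurd (hxδ.trans_le (hδg.trans (hmono.monotone (Nat.zero_le k)))) (lt_irrefl _)
  · have hm : g m < δ := by
      have := Nat.find_min hex (by rw [h]; exact m.lt_succ_self)
      exact lt_of_not_ge this
    have hδg : δ ≤ g (m + 1) := h ▸ Nat.find_spec hex
    obtain ⟨x, ⟨k, rfl⟩, hmx, hxδ⟩ := happ (g m) hm
    have hk : m < k := hmono.lt_iff_lt.mp hmx
    have : g (m+1) ≤ g k := hmono.monotone hk
    exact absurd ((hxδ.trans_le hδg).trans_le this) (lt_irrefl _)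

lemma good_zero (Γ : Set Ordinal.{0}) : AvoidsGood Γ 0 ∅ := by
  refine ⟨Set.empty_subset _, ?_, ?_, ?_⟩
  · intro δ _ hδ; exact absurd hδ (zero_le : (0:Ordinal) ≤ δ).not_gt
  · intro γ _ δ hδ; exact absurd hδ (zero_le : (0:Ordinal) ≤ δ).not_gt
  · rintro δ _ ⟨hδ, _⟩; exact hδ

lemma good_succ (Γ : Set Ordinal.{0}) (a : Ordinal.{0}) :
    AvoidsGood Γ (Order.succ a) {a} := by
  refine ⟨?_, ?_, ?_, ?_⟩
  · rintro x hx; rw [Set.mem_singleton_iff] at hx; subst hx; exact Order.lt_succ x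
  · intro δ h0 hδ happ
    obtain ⟨x, hx, h0x, hxδ⟩ := happ 0 h0
    rw [Set.mem_singleton_iff] at hx; subst hx
    exact absurd (hxδ.trans_le (Order.lt_succ_iff.mp hδ)) (lt_irrefl _)
  · intro γ hub δ hδ
    exact (Order.lt_succ_iff.mp hδ).trans (hub a rfl)
  · rintro δ _ ⟨hδ, h0, happ⟩
    rw [Set.mem_singleton_iff] at hδ; subst hδ
    obtain ⟨x, hx, h0x, hxδ⟩ := happ 0 h0
    rw [Set.mem_singleton_iff] at hx; subst hx
    exact absurd hxδ (lt_irrefl _)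

lemma good_omega (Γ : Set Ordinal.{0}) {α : Ordinal.{0}} (hlim : Order.IsSuccLimit α)
    (hcof : α.cof ≤ ℵ₀) : ∃ s, AvoidsGood Γ α s := by
  obtain ⟨ι, f, hlsub, hcard⟩ := Ordinal.exists_lsub_cof α
  have hcof' : α.cof = ℵ₀ := le_antisymm hcof (Ordinal.aleph0_le_cof.2 hlim)
  rw [hcof', ← Cardinal.mk_nat] at hcard
  obtain ⟨e⟩ := Cardinal.eq.1 hcard
  set f' : ℕ → Ordinal := f ∘ e.symm with hf'
  have hf'lt : ∀ n, f' n < α := fun n => hlsub ▸ Ordinal.lt_lsub f _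
  have hf'unb : ∀ γ < α, ∃ n, γ ≤ f' n := by
    intro γ hγ
    rw [← hlsub, Ordinal.lt_lsub_iff] at hγ
    obtain ⟨i, hi⟩ := hγ
    exact ⟨e i, by simpa [hf'] using hi⟩
  set g : ℕ → Ordinal := fun n => Nat.rec (f' 0) (fun n p => max (f' (n + 1)) p + 1) n with hg
  have hgs : ∀ n, g (n + 1) = max (f' (n + 1)) (g n) + 1 := fun n => rfl
  have hmono : StrictMono g := by
    apply strictMono_nat_of_lt_succ
    intro n
    rw [hgs]
    calc g n ≤ max (f' (n + 1)) (g n) := le_max_right _ _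
    _ < max (f' (n + 1)) (g n) + 1 := by
        rw [Ordinal.add_one_eq_succ]; exact Order.lt_succ _
  have hgf : ∀ n, f' n ≤ g n := by
    intro n
    cases n with
    | zero => exact le_rfl
    | succ n =>
      rw [hgs]
      exact (le_max_left _ _).trans (le_of_lt (by
        rw [Ordinal.add_one_eq_succ]; exact Order.lt_succ _))
  have hglt : ∀ n, g n < α := by
    intro n
    induction n with
    | zero => exact hf'lt 0
    | succ n ih =>
      rw [hgs, Ordinal.add_one_eq_succ]
      exact hlim.succ_lt (max_lt (hf'lt _) ih)
  have hgunb : ∀ δ < α, ∃ n, δ ≤ g n := by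
    intro δ hδ
    obtain ⟨n, hn⟩ := hf'unb δ hδ
    exact ⟨n, hn.trans (hgf n)⟩
  refine ⟨Set.range g, ?_, ?_, ?_, ?_⟩
  · rintro x ⟨n, rfl⟩; exact hglt n
  · intro δ h0 hδ happ
    exact absurd (no_acc_range g hmono hgunb hδ h0 happ) not_false
  · intro γ hub δ hδ
    obtain ⟨n, hn⟩ := hgunb δ hδ
    exact hn.trans (hub _ ⟨n, rfl⟩)
  · rintro δ _ ⟨⟨n, rfl⟩, h0, happ⟩
    exact no_acc_range g hmono hgunb (hglt n) h0 happ


lemma good_of_club2 (Γ : Set Ordinal.{0}) {α : Ordinal.{0}} {D : Set Ordinal.{0}}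
    (hclub : ClubIn D α) (hdis : Γ ∩ Set.Iio α ∩ D = ∅) : AvoidsGood Γ α D := by
  obtain ⟨hsub, hunb, hcl⟩ := hclub
  refine ⟨hsub, fun δ h0 hδ happ => hcl δ hδ h0 happ, ?_, ?_⟩
  · intro γ hub δ hδ
    obtain ⟨β, hβ, hle⟩ := hunb δ hδ
    exact hle.trans (hub β hβ)
  · rintro δ hδΓ ⟨hδD, -, -⟩
    have : δ ∈ Γ ∩ Set.Iio α ∩ D := ⟨⟨hδΓ, hsub hδD⟩, hδD⟩
    rw [hdis] at this
    exact this

/-- the accumulation points of a set satisfying the C-sequence conditions at a point of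
uncountable cofinality form a club. -/
lemma acc_club {α : Ordinal.{0}} (hcof : ℵ₀ < α.cof) {C : Set Ordinal.{0}}
    (hsub : C ⊆ Set.Iio α)
    (hclosed : ∀ δ, 0 < δ → δ < α → (∀ γ < δ, ∃ x ∈ C, γ < x ∧ x < δ) → δ ∈ C)
    (hunb : ∀ γ : Ordinal, (∀ x ∈ C, x ≤ γ) → ∀ δ < α, δ ≤ γ) :
    ClubIn {δ | δ < α ∧ 0 < δ ∧ ∀ γ < δ, ∃ x ∈ C, γ < x ∧ x < δ} α := by
  have hlim : Order.IsSuccLimit α := Ordinal.aleph0_le_cof.1 hcof.le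
  have hex : ∀ γ < α, ∃ x ∈ C, γ < x := by
    intro γ hγ
    by_contra h
    push_neg at h
    have := hunb γ h (Order.succ γ) (hlim.succ_lt hγ)
    exact absurd ((Order.succ_le_iff).mp this) (lt_irrefl γ)
  refine ⟨fun δ hδ => hδ.1, ?_, ?_⟩
  · -- unbounded
    intro γ hγ
    -- build an ω-chain in C above γ
    have step : ∀ x : {y : Ordinal // y ∈ C}, ∃ z : {y : Ordinal // y ∈ C}, x.1 < z.1 := by
      intro x
      obtain ⟨z, hz, hlt⟩ := hex x (hsub x.2)
      exact ⟨⟨z, hz⟩, hlt⟩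
    obtain ⟨x0, hx0, hγx0⟩ := hex γ hγ
    choose F hF using step
    let f : ℕ → {y : Ordinal // y ∈ C} := fun n => Nat.rec ⟨x0, hx0⟩ (fun _ p => F p) n
    have hfs : ∀ n, (f n).1 < (f (n + 1)).1 := fun n => hF (f n)
    have hflt : ∀ n, (f n).1 < α := fun n => hsub (f n).2
    set δ : Ordinal := ⨆ n, (f n).1 with hδdef
    have hδα : δ < α := Ordinal.iSup_lt_ord (by rw [Cardinal.mk_nat]; exact hcof) hflt
    have hle : ∀ n, (f n).1 ≤ δ := fun n => Ordinal.le_iSup _ n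
    have hγδ : γ < δ := hγx0.trans_le (hle 0)
    refine ⟨δ, ⟨hδα, lt_of_le_of_lt (zero_le : (0:Ordinal) ≤ γ) hγδ, ?_⟩, hγδ.le⟩
    intro γ' hγ'
    rw [hδdef, Ordinal.lt_iSup_iff] at hγ'
    obtain ⟨n, hn⟩ := hγ'
    exact ⟨(f n).1, (f n).2, hn, (hfs n).trans_le (hle (n + 1))⟩
  · -- closed
    intro δ hδ h0 happ
    refine ⟨hδ, h0, ?_⟩
    intro γ hγ
    obtain ⟨x, hx, hγx, hxδ⟩ := happ γ hγ
    obtain ⟨x', hx', hγx', hx'x⟩ := hx.2.2 γ hγx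
    exact ⟨x', hx', hγx', hx'x.trans hxδ⟩


/-- A stationary `Γ ⊆ κ` is nonreflecting iff there is a C-sequence over `κ`
avoiding `Γ`. -/
theorem nonreflecting_iff_avoiding (κ : Cardinal.{0}) (hreg : κ.IsRegular)
    (hκ : ℵ₀ < κ) (Γ : Set Ordinal) (hΓ : StatIn Γ κ.ord) :
    (∀ α < κ.ord, ℵ₀ < α.cof → ¬ StatIn (Γ ∩ Set.Iio α) α) ↔
    ∃ C : Ordinal.{0} → Set Ordinal.{0}, IsCSeq κ.ord C ∧
      ∀ α < κ.ord, ∀ δ ∈ Γ, ¬ IsAccOf (C α) δ := by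
  constructor
  · intro hnr
    have key : ∀ α : Ordinal, ∃ s, α < κ.ord → AvoidsGood Γ α s := by
      intro α
      by_cases hα : α < κ.ord
      · have hgood : ∃ s, AvoidsGood Γ α s := by
          rcases Ordinal.zero_or_succ_or_isSuccLimit α with h0 | ⟨a, rfl⟩ | hlim
          · exact ⟨∅, h0 ▸ good_zero Γ⟩
          · exact ⟨{a}, good_succ Γ a⟩
          · by_cases hcof : ℵ₀ < α.cof
            · have hns := hnr α hα hcof
              have h2 : ¬ ∀ D : Set Ordinal, ClubIn D α → ((Γ ∩ Set.Iio α) ∩ D).Nonempty :=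
                fun h => hns ⟨Set.inter_subset_right, h⟩
              push_neg at h2
              obtain ⟨D, hD, hne⟩ := h2
              exact ⟨D, good_of_club2 Γ hD hne⟩
            · exact good_omega Γ hlim (le_of_not_gt hcof)
        obtain ⟨s, hs⟩ := hgood
        exact ⟨s, fun _ => hs⟩
      · exact ⟨∅, fun h => absurd h hα⟩
    choose C hC using key
    refine ⟨C, ⟨?_, ?_, ?_⟩, ?_⟩
    · intro α hα; exact (hC α hα).1
    · intro α hα δ h0 hδ happ; exact (hC α hα).2.1 δ h0 hδ happ
    · intro α hα γ hub δ hδ; exact (hC α hα).2.2.1 γ hub δ hδ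
    · intro α hα δ hδ; exact (hC α hα).2.2.2 δ hδ
  · rintro ⟨C, ⟨hsub, hcl, hub⟩, hav⟩ α hα hcof hstat
    have hclub := acc_club hcof (hsub α hα)
      (fun δ h0 hδ happ => hcl α hα δ h0 hδ happ) (fun γ h => hub α hα γ h)
    obtain ⟨δ, hδΓ', hδD⟩ := hstat.2 _ hclub
    obtain ⟨hδα, h0, happ⟩ := hδD
    have hδC : δ ∈ C α := hcl α hα δ h0 hδα happ
    exact hav α hα δ hδΓ'.1 ⟨hδC, h0, happ⟩

end
end

section
/- Suppose κ is a regular uncountable cardinal and 𝐭 : [κ]² → [κ]³ witnesses Pℓ₁(κ, 1, χ). Then there exists a coloring d₁ : [κ]² → κ which is good for χ: for every σ < χ and every pairwise disjoint family ℬ ⊆ [κ]^σ of size κ, there are a stationary set Δ ⊆ κ and an ordinal η < κ such that, for every δ ∈ Δ, there exists b ∈ ℬ with min(b) > max{η, δ} and d₁ constantly equal to δ on {η} × b. -/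
open Cardinal Ordinal Set

noncomputable section

namespace GCaux

/-- least element of `D` that is `≥ α`. -/
def nxt (D : Set Ordinal.{0}) (α : Ordinal.{0}) : Ordinal.{0} := sInf (D ∩ Set.Ici α)

lemma nxt_mem {K : Ordinal.{0}} {D : Set Ordinal.{0}} (h : ∀ α' < K, ∃ β ∈ D, α' ≤ β)
    {α : Ordinal.{0}} (hα : α < K) : nxt D α ∈ D ∧ α ≤ nxt D α := by
  obtain ⟨β, hβ, hαβ⟩ := h α hα
  have hne : (D ∩ Set.Ici α).Nonempty := ⟨β, hβ, hαβ⟩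
  have hm := csInf_mem hne
  exact ⟨hm.1, hm.2⟩

lemma chain {K : Ordinal.{0}} (hcof : ℵ₀ < K.cof) (G : Ordinal.{0} → Ordinal.{0})
    (hG : ∀ β < K, β < G β ∧ G β < K) {α : Ordinal.{0}} (hα : α < K) :
    ∃ δ, α < δ ∧ δ < K ∧ (∀ n : ℕ, G^[n] α < δ) ∧ (∀ γ < δ, ∃ n : ℕ, γ < G^[n] α) ∧
      ∀ n m : ℕ, n ≤ m → G^[n] α ≤ G^[m] α := by
  set f : ℕ → Ordinal.{0} := fun n => G^[n] α with hf
  have hfK : ∀ n, f n < K := by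
    intro n; induction n with
    | zero => simpa [hf] using hα
    | succ n ih =>
      have : f (n+1) = G (f n) := by simp [hf, Function.iterate_succ_apply']
      rw [this]; exact (hG _ ih).2
  have hlt : ∀ n, f n < f (n+1) := by
    intro n
    have : f (n+1) = G (f n) := by simp [hf, Function.iterate_succ_apply']
    rw [this]; exact (hG _ (hfK n)).1
  have hmono : Monotone f := monotone_nat_of_le_succ fun n => (hlt n).le
  have hbdd : BddAbove (Set.range f) := ⟨K, by rintro x ⟨n, rfl⟩; exact (hfK n).le⟩
  set δ := ⨆ n, f n with hδ
  have hle : ∀ n, f n ≤ δ := fun n => le_ciSup hbdd n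
  have hfδ : ∀ n, f n < δ := fun n => lt_of_lt_of_le (hlt n) (hle (n+1))
  have hδK : δ < K := by
    refine Ordinal.iSup_lt_ord ?_ hfK
    rw [Cardinal.mk_nat]; exact hcof
  refine ⟨δ, ?_, hδK, hfδ, ?_, fun n m h => hmono h⟩
  · have := hfδ 0; simpa [hf] using this
  · intro γ hγ
    by_contra hcon
    push_neg at hcon
    exact absurd (ciSup_le hcon) (not_le.mpr hγ)

lemma clubIn_Iio {K : Ordinal.{0}} : ClubIn (Set.Iio K) K :=
  ⟨subset_rfl, fun α hα => ⟨α, hα, le_rfl⟩, fun δ hδ _ _ => hδ⟩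

lemma succ_lt' {K : Ordinal.{0}} (hlim : Order.IsSuccLimit K) {β : Ordinal.{0}} (hβ : β < K) :
    β + 1 < K := by
  rw [Ordinal.add_one_eq_succ]; exact hlim.succ_lt hβ

lemma lt_add_one' (β : Ordinal.{0}) : β < β + 1 := by
  rw [Ordinal.add_one_eq_succ]; exact Order.lt_succ β

/-- Diagonal intersection of clubs is a club. -/
lemma clubIn_diag {K : Ordinal.{0}} (hcof : ℵ₀ < K.cof) (hlim : Order.IsSuccLimit K)
    (hcard : ∀ β < K, β.card < K.cof) (F : Ordinal.{0} → Set Ordinal.{0})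
    (hF : ∀ γ < K, ClubIn (F γ) K) :
    ClubIn {δ | δ < K ∧ ∀ γ < δ, δ ∈ F γ} K := by
  refine ⟨fun x hx => hx.1, ?_, ?_⟩
  · -- unbounded
    intro α hα
    set G : Ordinal.{0} → Ordinal.{0} :=
      fun β => max (β + 1) (Ordinal.bsup β (fun γ _ => nxt (F γ) (β + 1))) with hGdef
    have hG : ∀ β < K, β < G β ∧ G β < K := by
      intro β hβ
      have h1 : β + 1 < K := succ_lt' hlim hβ
      constructor
      · exact lt_of_lt_of_le (lt_add_one' β) (le_max_left _ _)
      · refine max_lt h1 ?_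
        refine Ordinal.bsup_lt_ord (hcard β hβ) ?_
        intro γ hγ
        have hγK : γ < K := hγ.trans hβ
        have := (nxt_mem (hF γ hγK).2.1 h1).1
        exact (hF γ hγK).1 this
    obtain ⟨δ, hαδ, hδK, hfδ, hex, hmon⟩ := chain hcof G hG hα
    refine ⟨δ, ⟨hδK, ?_⟩, hαδ.le⟩
    intro γ hγδ
    have hγK : γ < K := hγδ.trans hδK
    have h0δ : 0 < δ := lt_of_le_of_lt (zero_le (a := α)) hαδ
    refine (hF γ hγK).2.2 δ hδK h0δ ?_
    intro γ' hγ'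
    obtain ⟨n, hn⟩ := hex γ hγδ
    obtain ⟨m, hm⟩ := hex γ' hγ'
    set k := max n m
    have hγk : γ < G^[k] α := lt_of_lt_of_le hn (hmon n k (le_max_left _ _))
    have hγ'k : γ' < G^[k] α := lt_of_lt_of_le hm (hmon m k (le_max_right _ _))
    have hkK : G^[k] α < K := lt_trans (hfδ k) hδK
    have h1 : G^[k] α + 1 < K := succ_lt' hlim hkK
    obtain ⟨hx1, hx2⟩ := nxt_mem (hF γ hγK).2.1 h1
    refine ⟨nxt (F γ) (G^[k] α + 1), hx1, ?_, ?_⟩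
    · exact lt_of_lt_of_le hγ'k (le_trans (lt_add_one' _).le hx2)
    · have hle1 : nxt (F γ) (G^[k] α + 1) ≤ Ordinal.bsup (G^[k] α) (fun γ _ => nxt (F γ) (G^[k] α + 1)) :=
        Ordinal.le_bsup _ γ hγk
      have hle2 : (Ordinal.bsup (G^[k] α) (fun γ _ => nxt (F γ) (G^[k] α + 1))) ≤ G (G^[k] α) :=
        le_max_right _ _
      have hle3 : G (G^[k] α) = G^[k+1] α := (Function.iterate_succ_apply' G k α).symm
      calc nxt (F γ) (G^[k] α + 1) ≤ G (G^[k] α) := le_trans hle1 hle2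
        _ = G^[k+1] α := hle3
        _ < δ := hfδ (k+1)
  · -- closed
    intro δ hδK h0δ hcl
    refine ⟨hδK, ?_⟩
    intro γ hγδ
    have hγK : γ < K := hγδ.trans hδK
    refine (hF γ hγK).2.2 δ hδK h0δ ?_
    intro γ' hγ'
    obtain ⟨x, hxΔ, hx1, hx2⟩ := hcl (max γ γ') (max_lt hγδ hγ')
    exact ⟨x, hxΔ.2 γ (lt_of_le_of_lt (le_max_left _ _) hx1),
      lt_of_le_of_lt (le_max_right _ _) hx1, hx2⟩


lemma two_lt {K : Ordinal.{0}} (hlim : Order.IsSuccLimit K) : (2 : Ordinal.{0}) < K :=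
  lt_of_lt_of_le (by exact_mod_cast Ordinal.nat_lt_omega0 2) (Ordinal.omega0_le_of_isSuccLimit hlim)

lemma clubIn_inter {K : Ordinal.{0}} (hcof : ℵ₀ < K.cof) (hlim : Order.IsSuccLimit K)
    (hcard : ∀ β < K, β.card < K.cof) {D E : Set Ordinal.{0}}
    (hD : ClubIn D K) (hE : ClubIn E K) : ClubIn (D ∩ E) K := by
  refine ⟨fun x hx => hD.1 hx.1, ?_, ?_⟩
  · intro α hα
    set F : Ordinal.{0} → Set Ordinal.{0} := fun γ => if γ = 0 then D else E with hFdef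
    have hF : ∀ γ < K, ClubIn (F γ) K := by
      intro γ _
      by_cases h : γ = 0 <;> simp [hFdef, h, hD, hE]
    have hΔ := clubIn_diag hcof hlim hcard F hF
    have h2K : (2:Ordinal) < K := two_lt hlim
    obtain ⟨β, hβΔ, hβ⟩ := hΔ.2.1 (max α 2) (max_lt hα h2K)
    have h2β : (2:Ordinal) ≤ β := le_trans (le_max_right _ _) hβ
    have h0β : (0:Ordinal) < β := lt_of_lt_of_le (by norm_num) h2β
    have h1β : (1:Ordinal) < β := lt_of_lt_of_le (by norm_num) h2β
    have hβD : β ∈ D := by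
      have := hβΔ.2 0 h0β; simpa [hFdef] using this
    have hβE : β ∈ E := by
      have := hβΔ.2 1 h1β; simpa [hFdef] using this
    exact ⟨β, ⟨hβD, hβE⟩, le_trans (le_max_left _ _) hβ⟩
  · intro δ hδK h0δ hcl
    constructor
    · refine hD.2.2 δ hδK h0δ ?_
      intro γ hγ
      obtain ⟨x, hx, h1, h2⟩ := hcl γ hγ
      exact ⟨x, hx.1, h1, h2⟩
    · refine hE.2.2 δ hδK h0δ ?_
      intro γ hγ
      obtain ⟨x, hx, h1, h2⟩ := hcl γ hγ
      exact ⟨x, hx.2, h1, h2⟩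

lemma statIn_inter_club {K : Ordinal.{0}} (hcof : ℵ₀ < K.cof) (hlim : Order.IsSuccLimit K)
    (hcard : ∀ β < K, β.card < K.cof) {S C : Set Ordinal.{0}}
    (hS : StatIn S K) (hC : ClubIn C K) : StatIn (S ∩ C) K := by
  refine ⟨fun x hx => hS.1 hx.1, ?_⟩
  intro E hE
  obtain ⟨x, hxS, hxCE⟩ := hS.2 (C ∩ E) (clubIn_inter hcof hlim hcard hC hE)
  exact ⟨x, ⟨hxS, hxCE.1⟩, hxCE.2⟩

lemma clubIn_Ioi {K : Ordinal.{0}} (hlim : Order.IsSuccLimit K) {ξ : Ordinal.{0}} (hξ : ξ < K) :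
    ClubIn (Set.Ioi ξ ∩ Set.Iio K) K := by
  refine ⟨fun x hx => hx.2, ?_, ?_⟩
  · intro α hα
    refine ⟨max (ξ+1) α, ⟨?_, max_lt (succ_lt' hlim hξ) hα⟩, le_max_right _ _⟩
    exact lt_of_lt_of_le (lt_add_one' ξ) (le_max_left _ _)
  · intro δ hδK h0δ hcl
    refine ⟨?_, hδK⟩
    rcases lt_or_ge ξ δ with h | h
    · exact h
    · exfalso
      obtain ⟨x, hx, _, h2⟩ := hcl 0 h0δ
      exact absurd (lt_trans h2 (lt_of_le_of_lt h hx.1)) (lt_irrefl x)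

lemma clubIn_acc {K : Ordinal.{0}} (hcof : ℵ₀ < K.cof) (hlim : Order.IsSuccLimit K)
    {A : Set Ordinal.{0}} (hAsub : A ⊆ Set.Iio K) (hunb : ∀ α < K, ∃ x ∈ A, α ≤ x) :
    ClubIn {δ | δ < K ∧ 0 < δ ∧ ∀ γ < δ, ∃ x ∈ A, γ < x ∧ x < δ} K := by
  refine ⟨fun x hx => hx.1, ?_, ?_⟩
  · intro α hα
    set G : Ordinal.{0} → Ordinal.{0} := fun β => nxt A (β+1) with hGdef
    have hG : ∀ β < K, β < G β ∧ G β < K := by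
      intro β hβ
      have h1 : β + 1 < K := succ_lt' hlim hβ
      obtain ⟨hm, hle⟩ := nxt_mem hunb h1
      exact ⟨lt_of_lt_of_le (lt_add_one' β) hle, hAsub hm⟩
    obtain ⟨δ, hαδ, hδK, hfδ, hex, hmon⟩ := chain hcof G hG hα
    refine ⟨δ, ⟨hδK, lt_of_le_of_lt (zero_le (a := α)) hαδ, ?_⟩, hαδ.le⟩
    intro γ hγδ
    obtain ⟨n, hn⟩ := hex γ hγδ
    have hnK : G^[n] α < K := lt_trans (hfδ n) hδK
    have h1 : G^[n] α + 1 < K := succ_lt' hlim hnK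
    obtain ⟨hm, hle⟩ := nxt_mem hunb h1
    refine ⟨nxt A (G^[n] α + 1), hm, ?_, ?_⟩
    · exact lt_of_lt_of_le hn (le_trans (lt_add_one' _).le hle)
    · have : nxt A (G^[n] α + 1) = G^[n+1] α := by
        rw [Function.iterate_succ_apply' G n α]
      rw [this]; exact hfδ (n+1)
  · intro δ hδK h0δ hcl
    refine ⟨hδK, h0δ, ?_⟩
    intro γ hγδ
    obtain ⟨x, hxacc, hγx, hxδ⟩ := hcl γ hγδ
    obtain ⟨y, hyA, hy1, hy2⟩ := hxacc.2.2 γ hγx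
    exact ⟨y, hyA, hy1, lt_trans hy2 hxδ⟩

lemma fodor {K : Ordinal.{0}} (hcof : ℵ₀ < K.cof) (hlim : Order.IsSuccLimit K)
    (hcard : ∀ β < K, β.card < K.cof) {S : Set Ordinal.{0}} (hS : StatIn S K)
    (f : Ordinal.{0} → Ordinal.{0}) (hf : ∀ δ ∈ S, f δ < δ) :
    ∃ η < K, StatIn {δ | δ ∈ S ∧ f δ = η} K := by
  by_contra hcon
  push_neg at hcon
  have hEx : ∀ η, η < K → ∃ E, ClubIn E K ∧ {δ | δ ∈ S ∧ f δ = η} ∩ E = ∅ := by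
    intro η hη
    have h1 := hcon η hη
    rw [StatIn] at h1
    push_neg at h1
    obtain ⟨E, hE1, hE2⟩ := h1 (fun x hx => hS.1 hx.1)
    exact ⟨E, hE1, hE2⟩
  choose E hE1 hE2 using hEx
  set F : Ordinal.{0} → Set Ordinal.{0} :=
    fun γ => if h : γ < K then E γ h else Set.Iio K with hFdef
  have hF : ∀ γ < K, ClubIn (F γ) K := by
    intro γ hγ; simp only [hFdef, dif_pos hγ]; exact hE1 γ hγ
  obtain ⟨δ, hδS, hδΔ⟩ := hS.2 _ (clubIn_diag hcof hlim hcard F hF)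
  have hδK : δ < K := hS.1 hδS
  have hfδ : f δ < δ := hf δ hδS
  have hfK : f δ < K := lt_trans hfδ hδK
  have hmem : δ ∈ F (f δ) := hδΔ.2 (f δ) hfδ
  rw [hFdef] at hmem
  simp only [dif_pos hfK] at hmem
  have : δ ∈ {δ' | δ' ∈ S ∧ f δ' = f δ} ∩ E (f δ) hfK := ⟨⟨hδS, rfl⟩, hmem⟩
  rw [hE2 (f δ) hfK] at this
  exact this


lemma mk_le_lift {κ : Cardinal.{0}} {A : Set Ordinal.{0}} (hA : A ⊆ Set.Iio κ.ord) :
    Cardinal.mk A ≤ Cardinal.lift.{1} κ := by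
  calc #A ≤ #(Set.Iio κ.ord) := Cardinal.mk_le_mk_of_subset hA
    _ = Cardinal.lift.{1} (κ.ord.card) := Ordinal.mk_Iio_ordinal κ.ord
    _ = Cardinal.lift.{1} κ := by rw [Cardinal.card_ord]

lemma unb_of_card {κ : Cardinal.{0}} {A : Set Ordinal.{0}} (hA : A ⊆ Set.Iio κ.ord)
    (hcard : Cardinal.lift.{1} κ ≤ #A) : ∀ α < κ.ord, ∃ x ∈ A, α ≤ x := by
  intro α hα
  by_contra hcon
  push_neg at hcon
  have hsub : A ⊆ Set.Iio α := fun x hx => hcon x hx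
  have h1 : #A ≤ Cardinal.lift.{1} α.card := by
    calc #A ≤ #(Set.Iio α) := Cardinal.mk_le_mk_of_subset hsub
      _ = Cardinal.lift.{1} α.card := Ordinal.mk_Iio_ordinal α
  have h2 : α.card < κ := Cardinal.lt_ord.mp hα
  exact absurd (le_trans hcard h1) (not_le.mpr (Cardinal.lift_lt.mpr h2))

lemma lift_le_mk_of_unbounded {κ : Cardinal.{0}} (hreg : κ.IsRegular)
    {A : Set Ordinal.{0}} (hA : A ⊆ Set.Iio κ.ord) (hunb : ∀ α < κ.ord, ∃ x ∈ A, α ≤ x) :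
    Cardinal.lift.{1} κ ≤ #A := by
  set φ := (Ordinal.ToType.mk (o := κ.ord)) with hφ
  set g : A → κ.ord.ToType := fun x => φ ⟨x.1, hA x.2⟩ with hg
  have hginj : Function.Injective g := by
    intro x y hxy
    have h1 := φ.injective hxy
    exact Subtype.ext (Subtype.mk_eq_mk.mp h1)
  have hunb' : Set.Unbounded (· < ·) (Set.range g) := by
    intro c
    obtain ⟨x, hxA, hx⟩ := hunb ((φ.symm c).1) (φ.symm c).2
    refine ⟨g ⟨x, hxA⟩, Set.mem_range_self _, ?_⟩
    have h1 : φ.symm c ≤ (⟨x, hA hxA⟩ : Set.Iio κ.ord) := hx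
    have h2 : c ≤ g ⟨x, hxA⟩ := by
      calc c = φ (φ.symm c) := (φ.apply_symm_apply c).symm
        _ ≤ φ ⟨x, hA hxA⟩ := φ.monotone h1
    exact not_lt.mpr h2
  have hcof : κ ≤ #(Set.range g) := by
    haveI inst : IsWellOrder κ.ord.ToType (fun a b : κ.ord.ToType => a < b) := isWellOrder_lt
    have h1 := Order.cof_le (α := κ.ord.ToType) (s := Set.range g)
      (fun c => by obtain ⟨b, hb, hbc⟩ := hunb' c; exact ⟨b, hb, not_lt.mp hbc⟩)
    rwa [Ordinal.cof_toType, hreg.cof_ord] at h1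
  have h2 : Cardinal.lift.{1} #(Set.range g) = Cardinal.lift.{0} #A :=
    Cardinal.mk_range_eq_of_injective hginj
  calc Cardinal.lift.{1} κ ≤ Cardinal.lift.{1} #(Set.range g) := Cardinal.lift_le.mpr hcof
    _ = Cardinal.lift.{0} #A := h2
    _ = #A := by simp


/-- A cofinal subset of `M` all of whose points are isolated in it. -/
lemma sparse_subset {K : Ordinal.{0}} (hlim : Order.IsSuccLimit K) {M : Set Ordinal.{0}}
    (hMsub : M ⊆ Set.Iio K) (hMunb : ∀ α < K, ∃ x ∈ M, α ≤ x) :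
    ∃ M' : Set Ordinal.{0}, M' ⊆ M ∧ (∀ α < K, ∃ x ∈ M', α ≤ x) ∧
      ∀ x ∈ M', ∃ γ < x, ∀ y ∈ M', ¬(γ < y ∧ y < x) := by
  set Mh : Set Ordinal.{0} := M ∪ Set.Ici K with hMh
  have hMhunb : ¬ BddAbove Mh := by
    rw [not_bddAbove_iff]
    intro a
    refine ⟨max (a+1) K, Or.inr (Set.mem_Ici.mpr (le_max_right _ _)), lt_of_lt_of_le (lt_add_one' a) (le_max_left _ _)⟩
  set e := Ordinal.enumOrd Mh with he
  have hesm : StrictMono e := Ordinal.enumOrd_strictMono hMhunb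
  set M' : Set Ordinal.{0} := {x | x < K ∧ ∃ i, e (i+1) = x} with hM'
  have hM'M : M' ⊆ M := by
    rintro x ⟨hxK, i, rfl⟩
    rcases Ordinal.enumOrd_mem hMhunb (i+1) with h | h
    · exact h
    · exact absurd hxK (not_lt.mpr h)
  refine ⟨M', hM'M, ?_, ?_⟩
  · intro α hα
    obtain ⟨m, hmM, hαm⟩ := hMunb α hα
    have hmK : m < K := hMsub hmM
    obtain ⟨m₂, hm₂M, hm₂⟩ := hMunb (m+1) (succ_lt' hlim hmK)
    obtain ⟨j, hj⟩ := Ordinal.enumOrd_surjective hMhunb (Or.inl hmM : m ∈ Mh)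
    obtain ⟨j₂, hj₂⟩ := Ordinal.enumOrd_surjective hMhunb (Or.inl hm₂M : m₂ ∈ Mh)
    rw [← he] at hj hj₂
    have hjj : j < j₂ := by
      rw [← hesm.lt_iff_lt, hj, hj₂]
      exact lt_of_lt_of_le (lt_add_one' m) hm₂
    have hj1 : e (j+1) ≤ e j₂ := by
      apply hesm.monotone
      rw [Ordinal.add_one_eq_succ]
      exact Order.succ_le_iff.mpr hjj
    have hxK : e (j+1) < K := lt_of_le_of_lt (hj1.trans_eq hj₂) (hMsub hm₂M)
    refine ⟨e (j+1), ⟨hxK, j, rfl⟩, ?_⟩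
    calc α ≤ m := hαm
      _ = e j := hj.symm
      _ ≤ e (j+1) := (hesm (lt_add_one' j)).le
  · rintro x ⟨hxK, i, rfl⟩
    refine ⟨e i, hesm (lt_add_one' i), ?_⟩
    rintro y ⟨hyK, j, rfl⟩ ⟨h1, h2⟩
    have hji : j + 1 < i + 1 := by rwa [← hesm.lt_iff_lt]
    have hji0 : j < i := by
      rw [Ordinal.add_one_eq_succ, Ordinal.add_one_eq_succ] at hji
      exact Order.succ_lt_succ_iff.mp hji
    have hji' : j + 1 ≤ i := by
      rw [Ordinal.add_one_eq_succ]
      exact Order.succ_le_of_lt hji0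
    exact absurd h1 (not_lt.mpr (hesm.monotone hji'))

end GCaux

open GCaux in
/-- From a witness to `Pℓ₁(κ, 1, χ)` one obtains a coloring `d₁ : [κ]² → κ`
which is good for `χ`. -/
theorem good_coloring_of_Pl1 (κ χ : Cardinal.{0}) (hreg : κ.IsRegular)
    (hκ : ℵ₀ < κ) (h : Pl1 κ 1 χ) :
    ∃ d₁ : Ordinal.{0} → Ordinal.{0} → Ordinal.{0},
      ∀ σ : Ordinal, σ < χ.ord → ∀ B : Set (Set Ordinal),
        IsFamily κ.ord σ B → #B = Cardinal.lift.{1} κ →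
        ∃ Δ : Set Ordinal, StatIn Δ κ.ord ∧ ∃ η < κ.ord,
          ∀ δ ∈ Δ, ∃ b ∈ B, (∀ β ∈ b, max η δ < β) ∧ ∀ β ∈ b, d₁ η β = δ := by
  classical
  obtain ⟨t, ht1, ht2⟩ := h
  refine ⟨fun η β => (t η β).2.2, ?_⟩
  intro σ hσ B hB hBcard
  have hκ0 : ℵ₀ ≤ κ := hκ.le
  set K := κ.ord with hK
  have hcof : ℵ₀ < K.cof := by rw [hreg.cof_eq]; exact hκ
  have hlim : Order.IsSuccLimit K := Cardinal.isSuccLimit_ord hκ0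
  have hcard' : ∀ β < K, β.card < K.cof := by
    intro β hβ; rw [hreg.cof_eq]; exact Cardinal.lt_ord.mp hβ
  -- every member of the family is nonempty
  have hBne : ∀ b ∈ B, b.Nonempty := by
    intro b hb
    rw [Set.nonempty_iff_ne_empty]
    rintro rfl
    have h0 : Ordinal.lift.{1} σ = 0 := by
      rw [← (hB.1 ∅ hb).2, otp, Ordinal.type_eq_zero_iff_isEmpty]
      exact Set.isEmpty_coe_sort.mpr rfl
    have hσ0 : σ = 0 := by
      rw [show (0:Ordinal.{1}) = Ordinal.lift.{1,0} 0 from (Ordinal.lift_zero).symm] at h0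
      exact Ordinal.lift_inj.mp h0
    have hsub : B ⊆ {(∅ : Set Ordinal)} := by
      intro b' hb'
      have hot := (hB.1 b' hb').2
      rw [hσ0] at hot
      simp only [Ordinal.lift_zero] at hot
      have hemp : IsEmpty ↥b' := by
        rw [← Ordinal.type_eq_zero_iff_isEmpty (r := ((· < ·) : b' → b' → Prop))]
        exact hot
      simp [Set.isEmpty_coe_sort.mp hemp]
    have hle : #B ≤ 1 := le_trans (Cardinal.mk_le_mk_of_subset hsub) (by simp)
    rw [hBcard] at hle
    have h2 : (ℵ₀ : Cardinal.{1}) ≤ Cardinal.lift.{1} κ := by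
      rw [← Cardinal.lift_aleph0.{1,0}]; exact Cardinal.lift_le.mpr hκ0
    exact absurd (le_trans h2 hle) (not_le.mpr Cardinal.one_lt_aleph0)
  -- minima
  have hmem_min : ∀ b ∈ B, sInf b ∈ b := fun b hb => csInf_mem (hBne b hb)
  have hinj : Set.InjOn sInf B := by
    intro b₁ h₁ b₂ h₂ he
    by_contra hne
    have hd := hB.2 h₁ h₂ hne
    have h3 := hmem_min b₂ h₂
    rw [← he] at h3
    exact Set.disjoint_left.mp hd (hmem_min b₁ h₁) h3
  set M := sInf '' B with hM
  have hMsub : M ⊆ Set.Iio K := by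
    rintro x ⟨b, hb, rfl⟩; exact (hB.1 b hb).1 (hmem_min b hb)
  have hMcard : #M = Cardinal.lift.{1} κ := by
    rw [hM, Cardinal.mk_image_eq_of_injOn _ _ hinj, hBcard]
  have hMunb : ∀ α < K, ∃ x ∈ M, α ≤ x := unb_of_card hMsub hMcard.ge
  obtain ⟨M', hM'M, hM'unb, hM'iso⟩ := sparse_subset hlim hMsub hMunb
  have hM'sub : M' ⊆ Set.Iio K := fun x hx => hMsub (hM'M hx)
  set Dav := {δ | δ < K ∧ 0 < δ ∧ ∀ γ < δ, ∃ x ∈ M', γ < x ∧ x < δ} with hDav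
  have hDavclub : ClubIn Dav K := clubIn_acc hcof hlim hM'sub hM'unb
  have hdisj : ∀ x ∈ M', x ∉ Dav := by
    intro x hx hxD
    obtain ⟨γ, hγx, hno⟩ := hM'iso x hx
    obtain ⟨y, hy, h1, h2⟩ := hxD.2.2 γ hγx
    exact hno y hy ⟨h1, h2⟩
  -- the thinned family
  set B' := {b | b ∈ B ∧ sInf b ∈ M'} with hB'
  have hB'B : B' ⊆ B := fun b hb => hb.1
  have hfam' : IsFamily K σ B' := ⟨fun a ha => hB.1 a (hB'B ha), hB.2.subset hB'B⟩
  have himg : sInf '' B' = M' := by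
    apply Set.Subset.antisymm
    · rintro x ⟨b, hb, rfl⟩; exact hb.2
    · intro m hm
      obtain ⟨b, hb, rfl⟩ := hM'M hm
      exact ⟨b, ⟨hb, hm⟩, rfl⟩
  have hB'card : #B' = Cardinal.lift.{1} κ := by
    have h1 : #↥(sInf '' B') = #↥B' :=
      Cardinal.mk_image_eq_of_injOn _ _ (hinj.mono hB'B)
    rw [himg] at h1
    rw [← h1]
    exact le_antisymm (mk_le_lift hM'sub) (lift_le_mk_of_unbounded hreg hM'sub hM'unb)
  obtain ⟨S, hSstat, hSprop⟩ := ht2 σ hσ B' hfam' hB'card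
  -- a positive element of S
  obtain ⟨αs, hαsS, hαs⟩ := hSstat.2 _ (clubIn_Ioi hlim hlim.pos)
  -- the stationary set S'
  have hC : ClubIn (Dav ∩ (Set.Ioi αs ∩ Set.Iio K)) K :=
    clubIn_inter hcof hlim hcard' hDavclub (clubIn_Ioi hlim hαs.2)
  have hS'stat : StatIn (S ∩ (Dav ∩ (Set.Ioi αs ∩ Set.Iio K))) K :=
    statIn_inter_club hcof hlim hcard' hSstat hC
  set S' := S ∩ (Dav ∩ (Set.Ioi αs ∩ Set.Iio K)) with hS'def
  have h01 : (0 : Ordinal) < (1 : Cardinal.{0}).ord := by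
    rw [Cardinal.ord_one]; exact zero_lt_one
  have hwit : ∀ δ ∈ S', ∃ a, a ∈ B' ∧ ∃ b, b ∈ B' ∧ SetLT a b ∧
      ∀ α ∈ a, ∀ β ∈ b, t α β = (0, αs, δ) := by
    intro δ hδ
    exact hSprop αs hαsS δ hδ.1 hδ.2.2.1 0 h01 hαs.1
  choose aF haF bF hbF hab hconst using hwit
  set f : Ordinal.{0} → Ordinal.{0} :=
    fun δ => if h : δ ∈ S' then sInf (aF δ h) else 0 with hf
  have hfreg : ∀ δ ∈ S', f δ < δ := by
    intro δ hδ
    have hfd : f δ = sInf (aF δ hδ) := by simp only [hf]; exact dif_pos hδ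
    have haB : aF δ hδ ∈ B := hB'B (haF δ hδ)
    have hbB : bF δ hδ ∈ B := hB'B (hbF δ hδ)
    have hamem : sInf (aF δ hδ) ∈ aF δ hδ := csInf_mem (hBne _ haB)
    have hbmem : sInf (bF δ hδ) ∈ bF δ hδ := csInf_mem (hBne _ hbB)
    have hltab : sInf (aF δ hδ) < sInf (bF δ hδ) := hab δ hδ _ hamem _ hbmem
    have hbK : sInf (bF δ hδ) < K := (hB.1 _ hbB).1 hbmem
    have htt := ht1 _ _ hltab hbK
    have hc := hconst δ hδ _ hamem _ hbmem
    rw [hc] at htt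
    rw [hfd]
    exact htt.2.2.1
  obtain ⟨η, hηK, hΔstat⟩ := fodor hcof hlim hcard' hS'stat f hfreg
  refine ⟨{δ | δ ∈ S' ∧ f δ = η}, hΔstat, η, hηK, ?_⟩
  intro δ hδ
  obtain ⟨hδS', hfδ⟩ := hδ
  have hfd : f δ = sInf (aF δ hδS') := by simp only [hf]; exact dif_pos hδS'
  have hη : η = sInf (aF δ hδS') := by rw [← hfδ, hfd]
  have hηa : η ∈ aF δ hδS' := by
    rw [hη]; exact csInf_mem (hBne _ (hB'B (haF δ hδS')))
  have hηδ : η < δ := hfδ ▸ hfreg δ hδS'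
  refine ⟨bF δ hδS', hB'B (hbF δ hδS'), ?_, ?_⟩
  · -- min b > max η δ
    have hbmem : sInf (bF δ hδS') ∈ bF δ hδS' := csInf_mem (hBne _ (hB'B (hbF δ hδS')))
    have h1 : η < sInf (bF δ hδS') := hab δ hδS' _ hηa _ hbmem
    have h2 : sInf (bF δ hδS') < K := (hB.1 _ (hB'B (hbF δ hδS'))).1 hbmem
    have htt := ht1 _ _ h1 h2
    have hc := hconst δ hδS' _ hηa _ hbmem
    rw [hc] at htt
    have hδle : δ ≤ sInf (bF δ hδS') := htt.2.2.2
    have hne2 : sInf (bF δ hδS') ≠ δ := by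
      intro hcontra
      have hmem' : sInf (bF δ hδS') ∈ M' := (hbF δ hδS').2
      rw [hcontra] at hmem'
      exact hdisj δ hmem' hδS'.2.1
    have hδlt : δ < sInf (bF δ hδS') := lt_of_le_of_ne hδle (Ne.symm hne2)
    intro β hβ
    have h3 : sInf (bF δ hδS') ≤ β := csInf_le (OrderBot.bddBelow _) hβ
    exact max_lt (lt_trans hηδ (lt_of_lt_of_le hδlt h3)) (lt_of_lt_of_le hδlt h3)
  · intro β hβ
    have hc := hconst δ hδS' _ hηa _ hβ
    show (t η β).2.2 = δ
    rw [hc]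


end
end

section
/- Let κ be a regular uncountable cardinal and ⟨C_α | α < κ⟩ be a ⊠⁻(κ)-sequence. Then for every stationary Γ ⊆ κ, every cardinal σ < sup(Reg(κ)), and every pairwise disjoint family ℬ ⊆ [κ]^σ of size κ, there exist δ ∈ Γ and an ordinal η < δ such that for κ-many b ∈ ℬ, for every β ∈ b, λ(δ,β) = η and ρ₂(δ,β) = η_{δ,β} (where λ, ρ₂ come from walking along the C-sequence, and η_{δ,β} := min{n < ω | η ∈ C_{Tr(δ,β)(n)} or n = ρ₂(δ,β)} + 1). In particular χ₂(⟨C_α⟩, κ) = sup(Reg(κ)). -/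
open Cardinal Ordinal Set

noncomputable section

section WalkAux

variable {κ : Ordinal.{0}} {C : Ordinal.{0} → Set Ordinal.{0}}

private lemma osSup_le {s : Set Ordinal.{0}} {a : Ordinal.{0}} (h : ∀ x ∈ s, x ≤ a) :
    sSup s ≤ a := by
  rcases s.eq_empty_or_nonempty with rfl | hne
  · rw [csSup_empty]; exact bot_le
  · exact csSup_le hne h

private lemma le_osSup {s : Set Ordinal.{0}} {a b : Ordinal.{0}}
    (hb : ∀ x ∈ s, x ≤ b) (ha : a ∈ s) : a ≤ sSup s :=
  le_csSup ⟨b, fun _ hx => hb _ hx⟩ ha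

private lemma nat_sInf_eq {s : Set ℕ} {a : ℕ} (ha : a ∈ s) (h : ∀ b < a, b ∉ s) :
    sInf s = a :=
  le_antisymm (Nat.sInf_le ha) (by
    by_contra hc
    push_neg at hc
    exact h _ hc (Nat.sInf_mem ⟨a, ha⟩))

private lemma csq_nonempty_above (hC : IsCSeq κ C) {ξ α : Ordinal.{0}}
    (hξ : ξ < κ) (h0 : 0 < α) (hα : α < ξ) : (C ξ ∩ Set.Ici α).Nonempty := by
  by_contra h
  rw [Set.not_nonempty_iff_eq_empty] at h
  have hlt : ∀ t ∈ C ξ, t < α := by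
    intro t ht
    by_contra hge
    have : t ∈ C ξ ∩ Set.Ici α := ⟨ht, not_lt.mp hge⟩
    simp [h] at this
  by_cases happ : ∀ γ < α, ∃ t ∈ C ξ, γ < t ∧ t < α
  · exact absurd (hlt α (hC.2.1 ξ hξ α h0 hα happ)) (lt_irrefl α)
  · push_neg at happ
    obtain ⟨γ, hγα, hγ⟩ := happ
    have hub : ∀ t ∈ C ξ, t ≤ γ := by
      intro t ht
      by_contra hgt
      exact absurd (hlt t ht) (not_lt.mpr (hγ t ht (not_le.mp hgt)))
    exact absurd (hC.2.2 ξ hξ γ hub α hα) (not_le.mpr hγα)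

private lemma tr_invariant (hC : IsCSeq κ C) {α β : Ordinal.{0}}
    (h0 : 0 < α) (hαβ : α < β) (hβ : β < κ) :
    ∀ n, α ≤ Tr C α β n ∧ Tr C α β n ≤ β ∧ Tr C α β n < κ := by
  intro n
  induction n with
  | zero => exact ⟨hαβ.le, le_refl β, hβ⟩
  | succ n ih =>
    obtain ⟨h1, h2, h3⟩ := ih
    by_cases hlt : α < Tr C α β n
    · have hne := csq_nonempty_above hC h3 h0 hlt
      have hmem : sInf (C (Tr C α β n) ∩ Set.Ici α) ∈ C (Tr C α β n) ∩ Set.Ici α :=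
        csInf_mem hne
      have heq : Tr C α β (n + 1) = sInf (C (Tr C α β n) ∩ Set.Ici α) := by
        simp [Tr, hlt]
      rw [heq]
      have hsub : sInf (C (Tr C α β n) ∩ Set.Ici α) < Tr C α β n :=
        hC.1 (Tr C α β n) h3 hmem.1
      exact ⟨hmem.2, (hsub.trans_le h2).le, hsub.trans h3⟩
    · have heq : Tr C α β (n + 1) = α := by simp [Tr, hlt]
      rw [heq]
      exact ⟨le_refl α, hαβ.le, hαβ.trans hβ⟩

private lemma tr_succ_eq {α β : Ordinal.{0}} {i : ℕ} (hgt : α < Tr C α β i) :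
    Tr C α β (i + 1) = sInf (C (Tr C α β i) ∩ Set.Ici α) := by
  simp [Tr, hgt]

private lemma tr_terminates (hC : IsCSeq κ C) {α β : Ordinal.{0}}
    (h0 : 0 < α) (hαβ : α < β) (hβ : β < κ) : ∃ n, Tr C α β n = α := by
  by_contra h
  push_neg at h
  have hgt : ∀ n, α < Tr C α β n := fun n =>
    lt_of_le_of_ne (tr_invariant hC h0 hαβ hβ n).1 (Ne.symm (h n))
  have hdec : ∀ n, Tr C α β (n + 1) < Tr C α β n := by
    intro n
    have h3 := (tr_invariant hC h0 hαβ hβ n).2.2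
    have hne := csq_nonempty_above hC h3 h0 (hgt n)
    have hmem := csInf_mem hne
    rw [tr_succ_eq (hgt n)]
    exact hC.1 _ h3 hmem.1
  obtain ⟨v, hv, hmin⟩ := Ordinal.lt_wf.has_min {o | ∃ n, Tr C α β n = o} ⟨β, 0, rfl⟩
  obtain ⟨n₀, rfl⟩ := hv
  exact hmin _ ⟨n₀ + 1, rfl⟩ (hdec n₀)


private lemma tr_rho2_eq (hC : IsCSeq κ C) {α β : Ordinal.{0}}
    (h0 : 0 < α) (hαβ : α < β) (hβ : β < κ) : Tr C α β (rho2 C α β) = α :=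
  Nat.sInf_mem (tr_terminates hC h0 hαβ hβ)

private lemma tr_ne_of_lt_rho2 {α β : Ordinal.{0}} {i : ℕ} (hi : i < rho2 C α β) :
    Tr C α β i ≠ α := fun h => absurd (Nat.sInf_le h) (not_le.mpr hi)

private lemma tr_gt_of_lt_rho2 (hC : IsCSeq κ C) {α β : Ordinal.{0}} {i : ℕ}
    (h0 : 0 < α) (hαβ : α < β) (hβ : β < κ) (hi : i < rho2 C α β) :
    α < Tr C α β i :=
  lt_of_le_of_ne (tr_invariant hC h0 hαβ hβ i).1 (Ne.symm (tr_ne_of_lt_rho2 hi))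

private lemma rho2_eq_of {α β : Ordinal.{0}} {N : ℕ} (hN : Tr C α β N = α)
    (hlt : ∀ i < N, Tr C α β i ≠ α) : rho2 C α β = N :=
  le_antisymm (Nat.sInf_le hN) (by
    by_contra h
    push_neg at h
    have hmem : Tr C α β (rho2 C α β) = α :=
      Nat.sInf_mem (⟨N, hN⟩ : {n | Tr C α β n = α}.Nonempty)
    exact hlt _ h hmem)

private lemma rho2_pos {α β : Ordinal.{0}} (hterm : ∃ n, Tr C α β n = α)
    (hne : β ≠ α) : 1 ≤ rho2 C α β := by
  rcases Nat.eq_zero_or_pos (rho2 C α β) with h | h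
  · have hmem : Tr C α β (rho2 C α β) = α := Nat.sInf_mem hterm
    rw [h] at hmem
    exact absurd hmem hne
  · exact h

private lemma acc_of_sSup_eq (hC : IsCSeq κ C) {ξ α : Ordinal.{0}}
    (hξ : ξ < κ) (h0 : 0 < α) (hαξ : α < ξ)
    (hs : sSup (C ξ ∩ Set.Iio α) = α) : IsAccOf (C ξ) α := by
  have happ : ∀ γ < α, ∃ t ∈ C ξ, γ < t ∧ t < α := by
    intro γ hγ
    by_contra hno
    push_neg at hno
    have hub : sSup (C ξ ∩ Set.Iio α) ≤ γ := by
      apply osSup_le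
      rintro t ⟨ht, htα⟩
      by_contra hgt
      exact absurd htα (not_lt.mpr (hno t ht (not_le.mp hgt)))
    rw [hs] at hub
    exact absurd hub (not_le.mpr hγ)
  exact ⟨hC.2.1 ξ hξ α h0 hαξ happ, h0, happ⟩

private lemma rho2_eq_succ_of_acc (hC : IsCSeq κ C) {α β : Ordinal.{0}} {i : ℕ}
    (h0 : 0 < α) (hαβ : α < β) (hβ : β < κ) (hi : i < rho2 C α β)
    (hs : sSup (C (Tr C α β i) ∩ Set.Iio α) = α) : rho2 C α β = i + 1 := by
  have h3 := (tr_invariant hC h0 hαβ hβ i).2.2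
  have hgt := tr_gt_of_lt_rho2 hC h0 hαβ hβ hi
  have hacc := acc_of_sSup_eq hC h3 h0 hgt hs
  have hTr : Tr C α β (i + 1) = α := by
    rw [tr_succ_eq hgt]
    exact le_antisymm (csInf_le (OrderBot.bddBelow _) ⟨hacc.1, le_refl α⟩)
      (le_csInf ⟨α, hacc.1, le_refl α⟩ fun t ht => ht.2)
  exact le_antisymm (Nat.sInf_le hTr) (Nat.succ_le_of_lt hi)

def lamm (C : Ordinal.{0} → Set Ordinal.{0}) (α β : Ordinal.{0}) : Ordinal.{0} :=
  (Finset.range (rho2 C α β)).sup fun i =>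
    if sSup (C (Tr C α β i) ∩ Set.Iio α) = α then 0
    else sSup (C (Tr C α β i) ∩ Set.Iio α)

private lemma lamm_lt {α β : Ordinal.{0}} (h0 : 0 < α) : lamm C α β < α := by
  rw [lamm]
  rw [Finset.sup_lt_iff (by rwa [Ordinal.bot_eq_zero])]
  intro i _
  split
  · exact h0
  · next hne =>
    exact lt_of_le_of_ne (osSup_le fun t ht => (Set.mem_Iio.mp ht.2).le) hne

private lemma term_le_lamm {α β : Ordinal.{0}} {i : ℕ} (hi : i < rho2 C α β)
    (hne : sSup (C (Tr C α β i) ∩ Set.Iio α) ≠ α) :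
    sSup (C (Tr C α β i) ∩ Set.Iio α) ≤ lamm C α β := by
  rw [lamm]
  have h := Finset.le_sup (s := Finset.range (rho2 C α β))
    (f := fun i => if sSup (C (Tr C α β i) ∩ Set.Iio α) = α then 0
      else sSup (C (Tr C α β i) ∩ Set.Iio α)) (Finset.mem_range.mpr hi)
  simpa only [if_neg hne] using h


private lemma tr_follow (hC : IsCSeq κ C) {δ x β : Ordinal.{0}}
    (h0 : 0 < δ) (hδx : δ < x) (hxβ : x < β) (hβκ : β < κ)
    (hbd : lamm C x β < δ) :
    ∀ i, i ≤ rho2 C x β → (∀ k < i, sSup (C (Tr C x β k) ∩ Set.Iio x) ≠ x) →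
      Tr C δ β i = Tr C x β i := by
  have h0x : 0 < x := h0.trans hδx
  intro i
  induction i with
  | zero => intro _ _; rfl
  | succ i ih =>
    intro hle hk
    have hi : i < rho2 C x β := lt_of_lt_of_le (Nat.lt_succ_self i) hle
    have hIH := ih hi.le (fun k hk' => hk k (hk'.trans (Nat.lt_succ_self i)))
    have hgt : x < Tr C x β i := tr_gt_of_lt_rho2 hC h0x hxβ hβκ hi
    have hgtδ : δ < Tr C δ β i := by rw [hIH]; exact hδx.trans hgt
    have hset : C (Tr C x β i) ∩ Set.Ici δ = C (Tr C x β i) ∩ Set.Ici x := by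
      apply Set.Subset.antisymm
      · rintro t ⟨htC, htδ⟩
        refine ⟨htC, ?_⟩
        by_contra hlt
        have htx : t ∈ C (Tr C x β i) ∩ Set.Iio x := ⟨htC, Set.mem_Iio.mpr (not_le.mp hlt)⟩
        have hlam : t ≤ lamm C x β :=
          le_trans (le_osSup (fun u hu => (Set.mem_Iio.mp hu.2).le) htx)
            (term_le_lamm hi (hk i (Nat.lt_succ_self i)))
        exact absurd (hlam.trans_lt hbd) (not_lt.mpr htδ)
      · rintro t ⟨htC, htx⟩
        exact ⟨htC, le_trans hδx.le htx⟩
    calc Tr C δ β (i + 1) = sInf (C (Tr C δ β i) ∩ Set.Ici δ) := tr_succ_eq hgtδ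
      _ = sInf (C (Tr C x β i) ∩ Set.Ici δ) := by rw [hIH]
      _ = sInf (C (Tr C x β i) ∩ Set.Ici x) := by rw [hset]
      _ = Tr C x β (i + 1) := (tr_succ_eq hgt).symm

private lemma tr_shift {δ x β : Ordinal.{0}} {N k₀ : ℕ}
    (h : Tr C δ β N = Tr C δ x k₀) :
    ∀ k, Tr C δ β (N + k) = Tr C δ x (k₀ + k) := by
  intro k
  induction k with
  | zero => simpa using h
  | succ k ih =>
    have e1 : N + (k + 1) = (N + k) + 1 := rfl
    have e2 : k₀ + (k + 1) = (k₀ + k) + 1 := rfl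
    rw [e1, e2]
    simp only [Tr]
    rw [ih]

private lemma comp_main (hC : IsCSeq κ C)
    {η δ x β : Ordinal.{0}}
    (hηδ : η < δ) (h0δ : 0 < δ) (hδx : δ < x) (hxκ : x < κ)
    {N : ℕ}
    (hl : lamb C δ x = η) (hr : rho2 C δ x = etaIdx C η δ x)
    (P1 : ∀ i < N, sSup (C (Tr C δ β i) ∩ Set.Iio δ) < η)
    (P2 : ∀ i < N, η ∉ C (Tr C δ β i))
    (P3 : ∀ i < N, Tr C δ β i ≠ δ)
    (Q1 : ∀ k, 1 ≤ k → Tr C δ β (N + k) = Tr C δ x k)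
    (Q2 : C (Tr C δ β N) ∩ Set.Iio δ = C x ∩ Set.Iio δ)
    (Q3 : η ∈ C (Tr C δ β N) ↔ η ∈ C x)
    (Q4 : Tr C δ β N ≠ δ) :
    lamb C δ β = η ∧ rho2 C δ β = etaIdx C η δ β := by
  set m := rho2 C δ x with hm
  have hm1 : 1 ≤ m :=
    rho2_pos (tr_terminates hC h0δ hδx hxκ) (ne_of_gt hδx)
  -- the first-occurrence index p for the walk from x
  set p := sInf {k | η ∈ C (Tr C δ x k) ∨ k = m} with hpdef
  have hpmem : p ∈ {k | η ∈ C (Tr C δ x k) ∨ k = m} :=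
    Nat.sInf_mem ⟨m, Or.inr rfl⟩
  have hpm : m = p + 1 := hr
  have hpltm : p < m := by omega
  have hpC : η ∈ C (Tr C δ x p) := by
    rcases hpmem with h | h
    · exact h
    · omega
  have hpmin : ∀ k < p, η ∉ C (Tr C δ x k) := by
    intro k hk hmem
    exact absurd (Nat.sInf_le (Or.inl hmem)) (not_le.mpr hk)
  have htermδx : Tr C δ x m = δ := tr_rho2_eq hC h0δ hδx hxκ
  -- rho2
  have hTrNm : Tr C δ β (N + m) = δ := by rw [Q1 m hm1]; exact htermδx
  have hne_δ : ∀ i < N + m, Tr C δ β i ≠ δ := by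
    intro i hi
    rcases lt_trichotomy i N with h | h | h
    · exact P3 i h
    · rw [h]; exact Q4
    · obtain ⟨k, hk1, rfl⟩ : ∃ k, 1 ≤ k ∧ i = N + k := ⟨i - N, by omega, by omega⟩
      rw [Q1 k hk1]
      exact tr_ne_of_lt_rho2 (by omega : k < m)
  have hrho : rho2 C δ β = N + m := rho2_eq_of hTrNm hne_δ
  -- lamb
  have hgle : ∀ k < m, sSup (C (Tr C δ x k) ∩ Set.Iio δ) ≤ η := by
    intro k hk
    have h := Finset.le_sup (s := Finset.range (rho2 C δ x))
      (f := fun k => sSup (C (Tr C δ x k) ∩ Set.Iio δ)) (Finset.mem_range.mpr hk)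
    rw [show ((Finset.range (rho2 C δ x)).sup fun k =>
      sSup (C (Tr C δ x k) ∩ Set.Iio δ)) = lamb C δ x from rfl, hl] at h
    exact h
  have hfN : sSup (C (Tr C δ β N) ∩ Set.Iio δ) = sSup (C x ∩ Set.Iio δ) := by
    rw [Q2]
  have hlamb : lamb C δ β = η := by
    apply le_antisymm
    · rw [lamb, hrho]
      apply Finset.sup_le
      intro i hi
      rw [Finset.mem_range] at hi
      rcases lt_trichotomy i N with h | h | h
      · exact (P1 i h).le
      · rw [h, hfN]
        have := hgle 0 (by omega)
        exact this
      · obtain ⟨k, hk1, rfl⟩ : ∃ k, 1 ≤ k ∧ i = N + k := ⟨i - N, by omega, by omega⟩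
        rw [Q1 k hk1]
        exact hgle k (by omega)
    · rw [← hl, lamb, lamb]
      apply Finset.sup_le
      intro k hk
      rw [Finset.mem_range, ← hm] at hk
      rcases Nat.eq_zero_or_pos k with rfl | hk1
      · have e : sSup (C (Tr C δ x 0) ∩ Set.Iio δ) = sSup (C (Tr C δ β N) ∩ Set.Iio δ) := by
          rw [hfN]; rfl
        rw [e]
        have hmemN : N ∈ Finset.range (rho2 C δ β) := by
          rw [hrho]; exact Finset.mem_range.mpr (by omega)
        exact Finset.le_sup (f := fun i => sSup (C (Tr C δ β i) ∩ Set.Iio δ)) hmemN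
      · rw [← Q1 k hk1]
        have hmemNk : N + k ∈ Finset.range (rho2 C δ β) := by
          rw [hrho]; exact Finset.mem_range.mpr (by omega)
        exact Finset.le_sup (f := fun i => sSup (C (Tr C δ β i) ∩ Set.Iio δ)) hmemNk
  -- etaIdx
  have hSinf : sInf {i | η ∈ C (Tr C δ β i) ∨ i = rho2 C δ β} = N + p := by
    apply nat_sInf_eq
    · left
      rcases Nat.eq_zero_or_pos p with hp0 | hp1
      · have hpC' : η ∈ C x := by rw [hp0] at hpC; exact hpC
        rw [hp0, Nat.add_zero]
        exact Q3.mpr hpC'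
      · rw [Q1 p hp1]
        exact hpC
    · intro i hi hiS
      rcases hiS with hmem | hieq
      · rcases lt_trichotomy i N with h | h | h
        · exact P2 i h hmem
        · subst h
          have h0' : (0:ℕ) ∈ {k | η ∈ C (Tr C δ x k) ∨ k = m} :=
            Or.inl (Q3.mp hmem)
          have := Nat.sInf_le h0'
          omega
        · obtain ⟨k, hk1, rfl⟩ : ∃ k, 1 ≤ k ∧ i = N + k := ⟨i - N, by omega, by omega⟩
          rw [Q1 k hk1] at hmem
          have hksets : k ∈ {k | η ∈ C (Tr C δ x k) ∨ k = m} := by exact Or.inl hmem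
          have := Nat.sInf_le hksets
          omega
      · rw [hrho] at hieq
        omega
  have hetai : etaIdx C η δ β = N + m := by
    rw [etaIdx, hSinf]
    omega
  exact ⟨hlamb, by rw [hrho, hetai]⟩



private lemma comp_step (hC : IsCSeq κ C)
    (hcoh : ∀ α < κ, ∀ δ, IsAccOf (C α) δ → C α ∩ Set.Iio δ = C δ)
    {η δ x β : Ordinal.{0}}
    (hηδ : η < δ) (h0δ : 0 < δ) (hδx : δ < x) (hxβ : x < β) (hβκ : β < κ)
    (hlm : lamm C x β < η)
    (hl : lamb C δ x = η) (hr : rho2 C δ x = etaIdx C η δ x) :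
    lamb C δ β = η ∧ rho2 C δ β = etaIdx C η δ β := by
  have h0x : 0 < x := h0δ.trans hδx
  have hxκ : x < κ := hxβ.trans hβκ
  have hδβ : δ < β := hδx.trans hxβ
  set n := rho2 C x β with hn
  have hn1 : 1 ≤ n := rho2_pos (tr_terminates hC h0x hxβ hβκ) (ne_of_gt hxβ)
  have htermx : Tr C x β n = x := tr_rho2_eq hC h0x hxβ hβκ
  have hlmδ : lamm C x β < δ := hlm.trans hηδ
  -- facts about pre-steps
  have hbound : ∀ i < n, sSup (C (Tr C x β i) ∩ Set.Iio x) ≠ x →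
      sSup (C (Tr C x β i) ∩ Set.Iio δ) < η ∧ η ∉ C (Tr C x β i) := by
    intro i hi hne
    constructor
    · refine lt_of_le_of_lt (osSup_le ?_) hlm
      rintro t ⟨htC, htδ⟩
      refine le_trans (le_osSup (fun u hu => (Set.mem_Iio.mp hu.2).le)
        (⟨htC, Set.mem_Iio.mpr ((Set.mem_Iio.mp htδ).trans hδx)⟩ :
          t ∈ C (Tr C x β i) ∩ Set.Iio x)) (term_le_lamm hi hne)
    · intro hmem
      have : η ≤ lamm C x β :=
        le_trans (le_osSup (fun u hu => (Set.mem_Iio.mp hu.2).le)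
          (⟨hmem, Set.mem_Iio.mpr (hηδ.trans hδx)⟩ : η ∈ C (Tr C x β i) ∩ Set.Iio x))
          (term_le_lamm hi hne)
      exact absurd hlm (not_lt.mpr this)
  have hpre : ∀ k, k + 1 < n → sSup (C (Tr C x β k) ∩ Set.Iio x) ≠ x := by
    intro k hk h
    have := rho2_eq_succ_of_acc hC h0x hxβ hβκ (by omega : k < n) h
    omega
  by_cases hcase : sSup (C (Tr C x β (n - 1)) ∩ Set.Iio x) = x
  · -- accumulation case
    set N := n - 1 with hN
    have hNn : N + 1 = n := by omega
    have hall : ∀ k < N, sSup (C (Tr C x β k) ∩ Set.Iio x) ≠ x := by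
      intro k hk
      exact hpre k (by omega)
    have hfoll : ∀ i ≤ N, Tr C δ β i = Tr C x β i := by
      intro i hi
      exact tr_follow hC h0δ hδx hxβ hβκ hlmδ i (by omega)
        (fun k hk => hall k (by omega))
    have hξeq : Tr C δ β N = Tr C x β N := hfoll N le_rfl
    have hNlt : N < n := by omega
    have hξgt : x < Tr C x β N := tr_gt_of_lt_rho2 hC h0x hxβ hβκ hNlt
    have hξκ : Tr C x β N < κ := (tr_invariant hC h0x hxβ hβκ N).2.2
    have hacc : IsAccOf (C (Tr C x β N)) x := acc_of_sSup_eq hC hξκ h0x hξgt hcase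
    have hcoh' : C (Tr C x β N) ∩ Set.Iio x = C x := hcoh _ hξκ x hacc
    -- Q2
    have Q2 : C (Tr C δ β N) ∩ Set.Iio δ = C x ∩ Set.Iio δ := by
      rw [hξeq, ← hcoh']
      ext t
      constructor
      · rintro ⟨ht, htδ⟩
        exact ⟨⟨ht, Set.mem_Iio.mpr ((Set.mem_Iio.mp htδ).trans hδx)⟩, htδ⟩
      · rintro ⟨⟨ht, _⟩, htδ⟩
        exact ⟨ht, htδ⟩
    have Q3 : η ∈ C (Tr C δ β N) ↔ η ∈ C x := by
      rw [hξeq, ← hcoh']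
      constructor
      · intro h
        exact ⟨h, Set.mem_Iio.mpr (hηδ.trans hδx)⟩
      · rintro ⟨h, _⟩
        exact h
    have Q4 : Tr C δ β N ≠ δ := by
      rw [hξeq]
      exact ne_of_gt (hδx.trans hξgt)
    -- first new step
    have hstep1 : Tr C δ β (N + 1) = Tr C δ x 1 := by
      have hgtδξ : δ < Tr C δ β N := by rw [hξeq]; exact hδx.trans hξgt
      have e1 : Tr C δ β (N + 1) = sInf (C (Tr C δ β N) ∩ Set.Ici δ) := tr_succ_eq hgtδξ
      have e2 : Tr C δ x 1 = sInf (C x ∩ Set.Ici δ) := by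
        have : δ < Tr C δ x 0 := hδx
        exact tr_succ_eq this
      rw [e1, e2, hξeq]
      -- sInf (C ξ ∩ Ici δ) = sInf (C x ∩ Ici δ) where C ξ ∩ Iio x = C x
      have hyne : (C x ∩ Set.Ici δ).Nonempty := csq_nonempty_above hC hxκ h0δ hδx
      have hymem := csInf_mem hyne
      set y := sInf (C x ∩ Set.Ici δ) with hy
      have hyx : y < x := hC.1 x hxκ hymem.1
      have hyξ : y ∈ C (Tr C x β N) := by
        have : y ∈ C (Tr C x β N) ∩ Set.Iio x := by rw [hcoh']; exact hymem.1
        exact this.1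
      apply le_antisymm
      · exact csInf_le (OrderBot.bddBelow _) ⟨hyξ, hymem.2⟩
      · have hzmem := csInf_mem (⟨y, hyξ, hymem.2⟩ : (C (Tr C x β N) ∩ Set.Ici δ).Nonempty)
        set z := sInf (C (Tr C x β N) ∩ Set.Ici δ) with hz
        have hzy : z ≤ y := csInf_le (OrderBot.bddBelow _) ⟨hyξ, hymem.2⟩
        have hzx : z ∈ C x := by
          have : z ∈ C (Tr C x β N) ∩ Set.Iio x := ⟨hzmem.1, Set.mem_Iio.mpr (lt_of_le_of_lt hzy hyx)⟩
          rw [hcoh'] at this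
          exact this
        exact csInf_le (OrderBot.bddBelow _) ⟨hzx, hzmem.2⟩
    have Q1 : ∀ k, 1 ≤ k → Tr C δ β (N + k) = Tr C δ x k := by
      intro k hk
      obtain ⟨k', rfl⟩ : ∃ k', k = 1 + k' := ⟨k - 1, by omega⟩
      have := tr_shift (C := C) hstep1 k'
      rw [show N + 1 + k' = N + (1 + k') from by omega] at this
      exact this
    have P1 : ∀ i < N, sSup (C (Tr C δ β i) ∩ Set.Iio δ) < η := by
      intro i hi
      rw [hfoll i hi.le]
      exact (hbound i (by omega) (hall i hi)).1
    have P2 : ∀ i < N, η ∉ C (Tr C δ β i) := by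
      intro i hi
      rw [hfoll i hi.le]
      exact (hbound i (by omega) (hall i hi)).2
    have P3 : ∀ i < N, Tr C δ β i ≠ δ := by
      intro i hi
      rw [hfoll i hi.le]
      exact ne_of_gt (hδx.trans (tr_gt_of_lt_rho2 hC h0x hxβ hβκ (by omega : i < n)))
    exact comp_main hC hηδ h0δ hδx hxκ hl hr P1 P2 P3 Q1 Q2 Q3 Q4
  · -- non-accumulation case
    have hall : ∀ k < n, sSup (C (Tr C x β k) ∩ Set.Iio x) ≠ x := by
      intro k hk
      rcases Nat.lt_or_ge (k+1) n with h | h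
      · exact hpre k h
      · have : k = n - 1 := by omega
        rw [this]
        exact hcase
    have hfoll : ∀ i ≤ n, Tr C δ β i = Tr C x β i := by
      intro i hi
      exact tr_follow hC h0δ hδx hxβ hβκ hlmδ i hi (fun k hk => hall k (by omega))
    have hbase : Tr C δ β n = Tr C δ x 0 := by
      rw [hfoll n le_rfl, htermx]
      rfl
    have Q1 : ∀ k, 1 ≤ k → Tr C δ β (n + k) = Tr C δ x k := by
      intro k _
      have := tr_shift (C := C) hbase k
      simpa using this
    have hTrn : Tr C δ β n = x := by rw [hbase]; rfl
    have Q2 : C (Tr C δ β n) ∩ Set.Iio δ = C x ∩ Set.Iio δ := by rw [hTrn]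
    have Q3 : η ∈ C (Tr C δ β n) ↔ η ∈ C x := by rw [hTrn]
    have Q4 : Tr C δ β n ≠ δ := by rw [hTrn]; exact ne_of_gt hδx
    have P1 : ∀ i < n, sSup (C (Tr C δ β i) ∩ Set.Iio δ) < η := by
      intro i hi
      rw [hfoll i hi.le]
      exact (hbound i hi (hall i hi)).1
    have P2 : ∀ i < n, η ∉ C (Tr C δ β i) := by
      intro i hi
      rw [hfoll i hi.le]
      exact (hbound i hi (hall i hi)).2
    have P3 : ∀ i < n, Tr C δ β i ≠ δ := by
      intro i hi
      rw [hfoll i hi.le]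
      exact ne_of_gt (hδx.trans (tr_gt_of_lt_rho2 hC h0x hxβ hβκ hi))
    exact comp_main hC hηδ h0δ hδx hxκ hl hr P1 P2 P3 Q1 Q2 Q3 Q4

private lemma base_pattern (hC : IsCSeq κ C) {η δ α : Ordinal.{0}}
    (hακ : α < κ) (hδC : δ ∈ C α) (h0δ : 0 < δ) (hδα : δ < α)
    (hηC : η ∈ C α) (hηδ : η < δ) (hη : sSup (C α ∩ Set.Iio δ) = η) :
    lamb C δ α = η ∧ rho2 C δ α = etaIdx C η δ α := by
  have hTr1 : Tr C δ α 1 = δ := by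
    have hgt : δ < Tr C δ α 0 := hδα
    rw [tr_succ_eq hgt]
    exact le_antisymm (csInf_le (OrderBot.bddBelow _) ⟨hδC, le_refl δ⟩)
      (le_csInf ⟨δ, hδC, le_refl δ⟩ fun t ht => ht.2)
  have hrho : rho2 C δ α = 1 := by
    apply rho2_eq_of hTr1
    intro i hi
    interval_cases i
    exact ne_of_gt hδα
  have hlamb : lamb C δ α = η := by
    rw [lamb, hrho]
    rw [show Finset.range 1 = {0} from rfl]
    rw [Finset.sup_singleton]
    exact hη
  have heta : etaIdx C η δ α = 1 := by
    rw [etaIdx]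
    have h0 : (0:ℕ) ∈ {n | η ∈ C (Tr C δ α n) ∨ n = rho2 C δ α} := Or.inl hηC
    rw [nat_sInf_eq h0 (by omega)]
  exact ⟨hlamb, by rw [hrho, heta]⟩


end WalkAux

section Tools

private lemma bdd_of_small {θ : Cardinal.{0}} (hθ : θ.IsRegular) (A : Set Ordinal.{0})
    (hA : A ⊆ Set.Iio θ.ord) (hcard : #A < Cardinal.lift.{1} θ) :
    ∃ ζ, ζ < θ.ord ∧ ∀ a ∈ A, a ≤ ζ := by
  have hsm : Small.{0} A := small_subset hA
  let f : Shrink.{0} A → Ordinal.{0} := fun i => ((equivShrink A).symm i : Ordinal)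
  have hf : ∀ i, f i < θ.ord := fun i => hA ((equivShrink A).symm i).2
  have hmk : #(Shrink.{0} A) < θ.ord.cof := by
    rw [hθ.cof_eq]
    have he : Cardinal.lift.{1} #(Shrink.{0} A) = #A := Cardinal.lift_mk_shrink'' A
    have : Cardinal.lift.{1} #(Shrink.{0} A) < Cardinal.lift.{1} θ := by
      rw [he]; exact hcard
    exact_mod_cast Cardinal.lift_lt.mp this
  have hsup : iSup f < θ.ord := Ordinal.iSup_lt_ord hmk hf
  refine ⟨iSup f, hsup, ?_⟩
  intro a ha
  have : a = f (equivShrink A ⟨a, ha⟩) := by simp [f]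
  rw [this]
  exact le_ciSup (Ordinal.bddAbove_range f) _

private lemma lift_isRegular {κ : Cardinal.{0}} (h : κ.IsRegular) :
    (Cardinal.lift.{1} κ).IsRegular := by
  constructor
  · exact Cardinal.aleph0_le_lift.mpr h.1
  · have h1 : (Cardinal.lift.{1} κ).ord = Ordinal.lift.{1} κ.ord := (Cardinal.lift_ord κ).symm
    rw [h1, ← Ordinal.lift_cof, h.cof_eq]

private lemma pigeonhole {κ : Cardinal.{0}} (hκ : κ.IsRegular)
    (T : Set (Set Ordinal.{0})) (hT : #T = Cardinal.lift.{1} κ)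
    (V : Set Ordinal.{0}) (hV : #V < Cardinal.lift.{1} κ)
    (F : Set Ordinal.{0} → Ordinal.{0}) (hF : ∀ b ∈ T, F b ∈ V) :
    ∃ v ∈ V, #{b ∈ T | F b = v} = Cardinal.lift.{1} κ := by
  by_contra hcon
  push_neg at hcon
  have hfib : ∀ v : V, #{b ∈ T | F b = (v : Ordinal)} < Cardinal.lift.{1} κ := by
    intro v
    have hle : #{b ∈ T | F b = (v : Ordinal)} ≤ Cardinal.lift.{1} κ := by
      rw [← hT]
      exact Cardinal.mk_le_mk_of_subset (fun b hb => hb.1)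
    exact lt_of_le_of_ne hle (hcon v v.2)
  -- injective map T → Σ v : V, fiber v
  let G : T → Σ v : V, {b ∈ T | F b = (v : Ordinal)} := fun b =>
    ⟨⟨F b, hF b b.2⟩, ⟨b, b.2, rfl⟩⟩
  have hGinj : Function.Injective G := by
    intro b b' hbb
    have := congrArg (fun z => (z.2 : Set Ordinal)) hbb
    exact Subtype.ext (by simpa [G] using this)
  have hle : #T ≤ Cardinal.sum fun v : V => #{b ∈ T | F b = (v : Ordinal)} := by
    rw [← Cardinal.mk_sigma]
    exact Cardinal.mk_le_of_injective hGinj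
  have hlt : (Cardinal.sum fun v : V => #{b ∈ T | F b = (v : Ordinal)}) < Cardinal.lift.{1} κ :=
    Cardinal.sum_lt_of_isRegular (lift_isRegular hκ) hV hfib
  rw [hT] at hle
  exact absurd (lt_of_le_of_lt hle hlt) (lt_irrefl _)

end Tools

/-- Along a `⊠⁻(κ)`-sequence: for every stationary `Γ`, every cardinal `σ` below
some regular cardinal `< κ`, and every pairwise disjoint `ℬ ⊆ [κ]^σ` of size `κ`,
there are `δ ∈ Γ` and `η < δ` such that κ-many `b ∈ ℬ` satisfy `λ(δ,β) = η` and
`ρ₂(δ,β) = η_{δ,β}` for all `β ∈ b`. -/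
theorem boxtimes_chi2 (κ : Cardinal.{0}) (hreg : κ.IsRegular) (hκ : ℵ₀ < κ)
    (C : Ordinal.{0} → Set Ordinal.{0}) (hC : IsCSeq κ.ord C)
    (hcoh : ∀ α < κ.ord, ∀ δ, IsAccOf (C α) δ → C α ∩ Set.Iio δ = C δ)
    (hhit : ∀ B : Set Ordinal, B ⊆ Set.Iio κ.ord → (∀ γ < κ.ord, ∃ x ∈ B, γ < x) →
      ∀ D : Set Ordinal, ClubIn D κ.ord → ∃ α ∈ D,
        ∀ γ < α, ∃ x ∈ C α, x ∈ B ∧ ¬ IsAccOf (C α) x ∧ γ < x)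
    (Γ : Set Ordinal) (hΓ : StatIn Γ κ.ord)
    (σ : Cardinal.{0}) (hσ : ∃ ν : Cardinal, ν.IsRegular ∧ ν < κ ∧ σ < ν)
    (B : Set (Set Ordinal)) (hB : IsFamily κ.ord σ.ord B)
    (hBsize : #B = Cardinal.lift.{1} κ) :
    ∃ δ ∈ Γ, ∃ η < δ,
      #{b ∈ B | ∀ β ∈ b, lamb C δ β = η ∧ rho2 C δ β = etaIdx C η δ β}
        = Cardinal.lift.{1} κ := by
  classical
  obtain ⟨ν, hνreg, hνκ, hσν⟩ := hσ
  have hκolim : Order.IsSuccLimit κ.ord := Cardinal.isSuccLimit_ord hreg.1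
  -- tail clubs
  have club_tail : ∀ γ < κ.ord, ClubIn {β | γ < β ∧ β < κ.ord} κ.ord := by
    intro γ hγ
    refine ⟨fun β hβ => hβ.2, ?_, ?_⟩
    · intro a ha
      have hlt : max γ a < κ.ord := max_lt hγ ha
      have hsucc : max γ a + 1 < κ.ord := by
        rw [Ordinal.add_one_eq_succ]
        exact hκolim.succ_lt hlt
      have h1 : max γ a < max γ a + 1 := by
        rw [Ordinal.add_one_eq_succ]
        exact Order.lt_succ _
      exact ⟨max γ a + 1, ⟨lt_of_le_of_lt (le_max_left _ _) h1, hsucc⟩,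
        le_of_lt (lt_of_le_of_lt (le_max_right _ _) h1)⟩
    · intro δ hδκ h0δ happ
      obtain ⟨t, ht, _, htδ⟩ := happ 0 h0δ
      exact ⟨ht.1.trans htδ, hδκ⟩
  -- Γ is unbounded
  have hΓunb : ∀ γ < κ.ord, ∃ t ∈ Γ, γ < t := by
    intro γ hγ
    obtain ⟨t, htΓ, htD⟩ := hΓ.2 _ (club_tail γ hγ)
    exact ⟨t, htΓ, htD.1⟩
  -- the set of good points
  set Sg : Set Ordinal :=
    {α | 0 < α ∧ α < κ.ord ∧ ∀ γ < α, ∃ t ∈ C α, t ∈ Γ ∧ ¬ IsAccOf (C α) t ∧ γ < t}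
    with hSgdef
  have hSgunb : ∀ γ < κ.ord, ∃ α ∈ Sg, γ < α := by
    intro γ hγ
    obtain ⟨α, hαD, hαprop⟩ := hhit Γ hΓ.1 hΓunb _ (club_tail γ hγ)
    refine ⟨α, ⟨lt_of_le_of_lt (zero_le (a := γ)) hαD.1, hαD.2, ?_⟩, hαD.1⟩
    intro γ' hγ'
    obtain ⟨t, htC, htΓ, htn, htγ⟩ := hαprop γ' hγ'
    exact ⟨t, htC, htΓ, htn, htγ⟩
  -- the tower
  set S' : Set Ordinal := Sg ∪ Set.Ici κ.ord with hS'def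
  have hS'unb : ¬ BddAbove S' := by
    rintro ⟨u, hu⟩
    have hmem : max u κ.ord + 1 ∈ S' := by
      right
      have : κ.ord ≤ max u κ.ord := le_max_right _ _
      have h1 : max u κ.ord < max u κ.ord + 1 := by
        rw [Ordinal.add_one_eq_succ]; exact Order.lt_succ _
      exact this.trans h1.le
    have h2 : u < max u κ.ord + 1 := by
      have h1 : max u κ.ord < max u κ.ord + 1 := by
        rw [Ordinal.add_one_eq_succ]; exact Order.lt_succ _
      exact lt_of_le_of_lt (le_max_left _ _) h1
    exact absurd (h2.trans_le (hu hmem)) (lt_irrefl _)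
  set g : Ordinal → Ordinal := Ordinal.enumOrd S' with hgdef
  have hgmono : StrictMono g := Ordinal.enumOrd_strictMono hS'unb
  have hgmem : ∀ j, g j ∈ S' := fun j => Ordinal.enumOrd_mem hS'unb j
  have hνord_lt : ν.ord < κ.ord := Cardinal.ord_lt_ord.mpr hνκ
  have hνolim : Order.IsSuccLimit ν.ord := Cardinal.isSuccLimit_ord hνreg.1
  have hgltκ : ∀ j < ν.ord, g j < κ.ord := by
    intro j
    induction j using Ordinal.induction with
    | _ j IH =>
      intro hj
      have hA : (g '' Set.Iio j) ⊆ Set.Iio κ.ord := by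
        rintro _ ⟨k, hk, rfl⟩
        exact IH k hk (hk.trans hj)
      have hcard : #(g '' Set.Iio j) < Cardinal.lift.{1} κ := by
        calc #(g '' Set.Iio j) ≤ #(Set.Iio j) := Cardinal.mk_image_le
          _ = Cardinal.lift.{1} j.card := Ordinal.mk_Iio_ordinal j
          _ < Cardinal.lift.{1} κ := by
              rw [Cardinal.lift_lt]
              exact Cardinal.lt_ord.mp (hj.trans hνord_lt)
      obtain ⟨ζ, hζκ, hζ⟩ := bdd_of_small hreg _ hA hcard
      obtain ⟨w, hwSg, hwζ⟩ := hSgunb ζ hζκ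
      have hgw : g j ≤ w := by
        apply Ordinal.enumOrd_le_of_forall_lt (Or.inl hwSg)
        intro b hb
        exact lt_of_le_of_lt (hζ _ ⟨b, hb, rfl⟩) hwζ
      exact lt_of_le_of_lt hgw hwSg.2.1
  set x : Ordinal := sSup (g '' Set.Iio ν.ord) with hxdef
  have hxbd : ∀ a ∈ g '' Set.Iio ν.ord, a ≤ κ.ord := by
    rintro _ ⟨j, hj, rfl⟩
    exact (hgltκ j hj).le
  have hxκ : x < κ.ord := by
    have hA : (g '' Set.Iio ν.ord) ⊆ Set.Iio κ.ord := by
      rintro _ ⟨k, hk, rfl⟩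
      exact hgltκ k hk
    have hcard : #(g '' Set.Iio ν.ord) < Cardinal.lift.{1} κ := by
      calc #(g '' Set.Iio ν.ord) ≤ #(Set.Iio ν.ord) := Cardinal.mk_image_le
        _ = Cardinal.lift.{1} (ν.ord).card := Ordinal.mk_Iio_ordinal ν.ord
        _ < Cardinal.lift.{1} κ := by
            rw [Cardinal.lift_lt, Cardinal.card_ord]
            exact hνκ
    obtain ⟨ζ, hζκ, hζ⟩ := bdd_of_small hreg _ hA hcard
    exact lt_of_le_of_lt (osSup_le hζ) hζκ
  have hgx : ∀ j < ν.ord, g j < x := by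
    intro j hj
    have hsucc : j + 1 < ν.ord := by
      rw [Ordinal.add_one_eq_succ]; exact hνolim.succ_lt hj
    have h1 : g j < g (j + 1) := hgmono (by
      rw [Ordinal.add_one_eq_succ]; exact Order.lt_succ _)
    exact lt_of_lt_of_le h1 (le_osSup hxbd ⟨j + 1, hsucc, rfl⟩)
  have h0x : 0 < x := lt_of_le_of_lt (zero_le (a := _)) (hgx 0 hνolim.pos)
  -- blocks entirely above x
  set B' : Set (Set Ordinal) := {b ∈ B | ∀ β ∈ b, x < β} with hB'def
  have hB'sub : B' ⊆ B := fun b hb => hb.1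
  have hB'card : #B' = Cardinal.lift.{1} κ := by
    have hdiff : #(B \ B' : Set (Set Ordinal.{0})) ≤ #(Set.Iic x) := by
      have hw : ∀ b : ↥(B \ B'), ∃ β, β ∈ (b : Set Ordinal) ∧ β ≤ x := by
        rintro ⟨b, hbB, hbn⟩
        have h1 : ¬ ∀ β ∈ b, x < β := fun h => hbn ⟨hbB, h⟩
        push_neg at h1
        obtain ⟨β, hβb, hβx⟩ := h1
        exact ⟨β, hβb, hβx⟩
      choose w hw1 hw2 using hw
      have hinj : Function.Injective
          (fun b : ↥(B \ B') => (⟨w b, hw2 b⟩ : ↥(Set.Iic x))) := by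
        intro b b' h
        have hww : w b = w b' := congrArg Subtype.val h
        by_contra hne
        have hbne : (b : Set Ordinal) ≠ (b' : Set Ordinal) :=
          fun hh => hne (Subtype.ext hh)
        have hdisj := hB.2 b.2.1 b'.2.1 hbne
        have hmem1 : w b ∈ (b : Set Ordinal) := hw1 b
        have hmem2 : w b ∈ (b' : Set Ordinal) := by rw [hww]; exact hw1 b'
        exact Set.disjoint_left.mp hdisj hmem1 hmem2
      exact Cardinal.mk_le_of_injective hinj
    have hIic : #(Set.Iic x) < Cardinal.lift.{1} κ := by
      have hsub : Set.Iic x ⊆ Set.Iio (x + 1) := by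
        intro a ha
        have h1 : x < x + 1 := by
          rw [Ordinal.add_one_eq_succ]; exact Order.lt_succ _
        exact lt_of_le_of_lt ha h1
      have hx1 : x + 1 < κ.ord := by
        rw [Ordinal.add_one_eq_succ]; exact hκolim.succ_lt hxκ
      calc #(Set.Iic x) ≤ #(Set.Iio (x + 1)) := Cardinal.mk_le_mk_of_subset hsub
        _ = Cardinal.lift.{1} (x + 1).card := Ordinal.mk_Iio_ordinal _
        _ < Cardinal.lift.{1} κ := by
            rw [Cardinal.lift_lt]
            exact Cardinal.lt_ord.mp hx1
    have hle : #B' ≤ Cardinal.lift.{1} κ := hBsize ▸ Cardinal.mk_le_mk_of_subset hB'sub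
    rcases lt_or_eq_of_le hle with hlt | heq
    · exfalso
      have h1 : #B ≤ #B' + #(B \ B' : Set (Set Ordinal.{0})) := by
        have h1' := Cardinal.mk_union_le B' (B \ B')
        rwa [Set.union_diff_cancel hB'sub] at h1'
      have h2 : #B' + #(B \ B' : Set (Set Ordinal.{0})) < Cardinal.lift.{1} κ :=
        Cardinal.add_lt_of_lt (Cardinal.aleph0_le_lift.mpr hreg.1) hlt
          (lt_of_le_of_lt hdiff hIic)
      rw [hBsize] at h1
      exact absurd (lt_of_le_of_lt h1 h2) (lt_irrefl _)
    · exact heq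
  -- choose the level for each block
  have hJ : ∀ b ∈ B', ∃ j, j < ν.ord ∧ ∀ β ∈ b, lamm C x β < g j := by
    intro b hb
    have hchoice : ∀ β : ↥b, ∃ j, j < ν.ord ∧ lamm C x (β : Ordinal) < g j := by
      intro β
      have hlam : lamm C x (β : Ordinal) < x := lamm_lt h0x
      by_contra hno
      push_neg at hno
      have hxle : x ≤ lamm C x (β : Ordinal) := by
        apply osSup_le
        rintro _ ⟨j, hj, rfl⟩
        exact hno j hj
      exact absurd hlam (not_lt.mpr hxle)
    choose jf hjf1 hjf2 using hchoice
    have hbmk : #(↥b) = Cardinal.lift.{1} σ := by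
      have hotp := (hB.1 b hb.1).2
      have hcard := congrArg Ordinal.card hotp
      rw [otp, Ordinal.card_type] at hcard
      rw [hcard, ← Ordinal.lift_card, Cardinal.card_ord]
    have hrsub : Set.range jf ⊆ Set.Iio ν.ord := by
      rintro _ ⟨β, rfl⟩
      exact hjf1 β
    have hrcard : #(Set.range jf) < Cardinal.lift.{1} ν := by
      calc #(Set.range jf) ≤ #(↥b) := Cardinal.mk_range_le
        _ = Cardinal.lift.{1} σ := hbmk
        _ < Cardinal.lift.{1} ν := Cardinal.lift_lt.mpr hσν
    obtain ⟨ζj, hζj, hbd⟩ := bdd_of_small hνreg _ hrsub hrcard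
    have hζjsucc : ζj + 1 < ν.ord := by
      rw [Ordinal.add_one_eq_succ]; exact hνolim.succ_lt hζj
    refine ⟨ζj + 1, hζjsucc, ?_⟩
    intro β hβ
    calc lamm C x β < g (jf ⟨β, hβ⟩) := hjf2 ⟨β, hβ⟩
      _ ≤ g ζj := hgmono.monotone (hbd _ ⟨⟨β, hβ⟩, rfl⟩)
      _ < g (ζj + 1) := hgmono (by
          rw [Ordinal.add_one_eq_succ]; exact Order.lt_succ _)
  -- pigeonhole over levels
  set F : Set Ordinal → Ordinal := fun b => if h : b ∈ B' then (hJ b h).choose else 0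
    with hFdef
  have hFeq : ∀ b (hb : b ∈ B'), F b = (hJ b hb).choose := by
    intro b hb
    simp only [hFdef]
    rw [dif_pos hb]
  have hFmem : ∀ b ∈ B', F b ∈ Set.Iio ν.ord := by
    intro b hb
    rw [hFeq b hb]
    exact (hJ b hb).choose_spec.1
  have hVcard : #(Set.Iio ν.ord) < Cardinal.lift.{1} κ := by
    rw [Ordinal.mk_Iio_ordinal, Cardinal.lift_lt, Cardinal.card_ord]
    exact hνκ
  obtain ⟨jstar, hjstar, hGcard⟩ := pigeonhole hreg B' hB'card _ hVcard F hFmem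
  set G : Set (Set Ordinal) := {b ∈ B' | F b = jstar} with hGdef
  have hGprop : ∀ b ∈ G, ∀ β ∈ b, lamm C x β < g jstar := by
    rintro b ⟨hb, hFb⟩ β hβ
    have hlt := (hJ b hb).choose_spec.2 β hβ
    rw [← hFeq b hb, hFb] at hlt
    exact hlt
  -- the funnel level α
  have hjsucc : jstar + 1 < ν.ord := by
    rw [Ordinal.add_one_eq_succ]; exact hνolim.succ_lt hjstar
  set α : Ordinal := g (jstar + 1) with hαdef
  have hακ : α < κ.ord := hgltκ _ hjsucc
  have hαSg : α ∈ Sg := by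
    rcases hgmem (jstar + 1) with h | h
    · exact h
    · exact absurd hακ (not_lt.mpr h)
  have h0α : 0 < α := hαSg.1
  have hhitα : ∀ γ < α, ∃ t ∈ C α, t ∈ Γ ∧ ¬ IsAccOf (C α) t ∧ γ < t := hαSg.2.2
  have hζα : g jstar < α := hgmono (by
    rw [Ordinal.add_one_eq_succ]; exact Order.lt_succ _)
  have hαx : α < x := hgx _ hjsucc
  -- bounds
  set ζ' : Ordinal := lamm C α x with hζ'def
  have hζ'α : ζ' < α := lamm_lt h0α
  set γ₀ : Ordinal := max (g jstar) ζ' with hγ₀def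
  have hγ₀α : γ₀ < α := max_lt hζα hζ'α
  -- pick c and δ
  obtain ⟨c, hcC, _, _, hγ₀c⟩ := hhitα γ₀ hγ₀α
  have hcα : c < α := hC.1 α hακ hcC
  obtain ⟨δ, hδC, hδΓ, hδnacc, hcδ⟩ := hhitα c hcα
  have hδα : δ < α := hC.1 α hακ hδC
  have h0c : 0 < c := lt_of_le_of_lt (zero_le (a := γ₀)) hγ₀c
  have h0δ : 0 < δ := h0c.trans hcδ
  -- η
  set η : Ordinal := sSup (C α ∩ Set.Iio δ) with hηdef
  have hδbd : ∀ t ∈ C α ∩ Set.Iio δ, t ≤ δ := fun t ht => (Set.mem_Iio.mp ht.2).le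
  have hcmem : c ∈ C α ∩ Set.Iio δ := ⟨hcC, Set.mem_Iio.mpr hcδ⟩
  have hcη : c ≤ η := le_osSup hδbd hcmem
  have hηδ : η < δ := by
    have hnapp : ¬ ∀ γ < δ, ∃ t ∈ C α, γ < t ∧ t < δ := fun h => hδnacc ⟨hδC, h0δ, h⟩
    push_neg at hnapp
    obtain ⟨γ₁, hγ₁δ, hγ₁⟩ := hnapp
    have hηγ₁ : η ≤ γ₁ := by
      apply osSup_le
      rintro t ⟨htC, htδ⟩
      by_contra hgt
      exact absurd (Set.mem_Iio.mp htδ) (not_lt.mpr (hγ₁ t htC (not_le.mp hgt)))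
    exact lt_of_le_of_lt hηγ₁ hγ₁δ
  have hηC : η ∈ C α := by
    by_cases hmem : η ∈ C α
    · exact hmem
    · exfalso
      have happ : ∀ γ < η, ∃ t ∈ C α, γ < t ∧ t < η := by
        intro γ hγ
        by_contra hno
        push_neg at hno
        have hle : η ≤ γ := by
          apply osSup_le
          rintro t ⟨htC, htδ⟩
          by_contra hgt
          have hηt : η ≤ t := hno t htC (not_le.mp hgt)
          have htη : t ≤ η := le_osSup hδbd ⟨htC, htδ⟩
          exact hmem (le_antisymm htη hηt ▸ htC)
        exact absurd hγ (not_lt.mpr hle)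
      have h0η : 0 < η := h0c.trans_le hcη
      exact hmem (hC.2.1 α hακ η h0η (hηδ.trans hδα) happ)
  -- key inequalities below η
  have hζ'η : ζ' < η := lt_of_lt_of_le (lt_of_le_of_lt (le_max_right _ _) hγ₀c) hcη
  have hζη : g jstar < η := lt_of_lt_of_le (lt_of_le_of_lt (le_max_left _ _) hγ₀c) hcη
  -- base pattern at α, then propagate to x and to every β
  have hbase : lamb C δ α = η ∧ rho2 C δ α = etaIdx C η δ α :=
    base_pattern hC hακ hδC h0δ hδα hηC hηδ rfl
  have hpatx : lamb C δ x = η ∧ rho2 C δ x = etaIdx C η δ x :=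
    comp_step hC hcoh hηδ h0δ hδα hαx hxκ hζ'η hbase.1 hbase.2
  have hpatβ : ∀ b ∈ G, ∀ β ∈ b, lamb C δ β = η ∧ rho2 C δ β = etaIdx C η δ β := by
    intro b hb β hβ
    have hβκ : β < κ.ord := (hB.1 b hb.1.1).1 hβ
    have hxβ : x < β := hb.1.2 β hβ
    exact comp_step hC hcoh hηδ h0δ (hδα.trans hαx) hxβ hβκ
      ((hGprop b hb β hβ).trans hζη) hpatx.1 hpatx.2
  -- conclusion
  refine ⟨δ, hδΓ, η, hηδ, ?_⟩
  apply le_antisymm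
  · rw [← hBsize]
    exact Cardinal.mk_le_mk_of_subset (fun b hb => hb.1)
  · rw [← hGcard]
    apply Cardinal.mk_le_mk_of_subset
    intro b hb
    exact ⟨hb.1.1, hpatβ b hb⟩

end
end
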